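/- arXiv:1204.3167 — 4 statements merged into one kernel-verified Lean document; each statement's English description precedes it below -/
import Mathlib

section
/- Let V₁, ..., V_k be i.i.d. nonnegative random variables with -log Pr(V₁ > x) ∼ c x^p as x → ∞, where c > 0 and 0 < p < 1. Then -log Pr(V₁ + ... + V_k > x) ∼ c x^p as x → ∞. -/
open MeasureTheory Real Filter ProbabilityTheory
open scoped NNReal ENNReal

section Aux

variable {Ω : Type*} [MeasurableSpace Ω]

/-- From the logarithmic tail asymptotics, extract an eventual exponential tail bound
together with positivity of the tail probability. -/
lemma tail_bound (μ : Measure Ω) (c p : ℝ) (hc : 0 < c) (hp : 0 < p) {X : Ω → ℝ}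
    (h : Tendsto (fun x : ℝ => (-Real.log ((μ {ω | X ω > x}).toReal)) / (c * x ^ p))
      atTop (nhds 1)) {ε : ℝ} (hε : 0 < ε) (hε1 : ε < 1) :
    ∀ᶠ y in atTop, 0 < (μ {ω | X ω > y}).toReal ∧
      (μ {ω | X ω > y}).toReal ≤ Real.exp (-((1 - ε) * (c * y ^ p))) := by
  filter_upwards [h.eventually (eventually_gt_nhds (by linarith : 1 - ε < 1)),
    eventually_gt_atTop 0] with y hy hy0
  set P := (μ {ω | X ω > y}).toReal with hP
  have hcx : 0 < c * y ^ p := mul_pos hc (Real.rpow_pos_of_pos hy0 p)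
  have hlog : (1 - ε) * (c * y ^ p) < -Real.log P := (lt_div_iff₀ hcx).mp hy
  have hpos : 0 < (1 - ε) * (c * y ^ p) := mul_pos (by linarith) hcx
  have hP0 : 0 < P := by
    rcases (ENNReal.toReal_nonneg : 0 ≤ P).lt_or_eq with h' | h'
    · exact h'
    · exfalso
      rw [hP, ← h', Real.log_zero] at hlog
      linarith
  refine ⟨hP0, ?_⟩
  have : Real.log P ≤ -((1 - ε) * (c * y ^ p)) := by linarith
  calc P = Real.exp (Real.log P) := (Real.exp_log hP0).symm
    _ ≤ Real.exp (-((1 - ε) * (c * y ^ p))) := Real.exp_le_exp.mpr this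

lemma le_rpow_self {p : ℝ} (hp : 0 < p) (hp1 : p ≤ 1) {a : ℝ} (h0 : 0 ≤ a) (h1 : a ≤ 1) :
    a ≤ a ^ p := by
  rcases h0.eq_or_lt with h | h
  · rw [← h, Real.zero_rpow hp.ne']
  · calc a = a ^ (1 : ℝ) := (Real.rpow_one a).symm
      _ ≤ a ^ p := Real.rpow_le_rpow_of_exponent_ge h h1 hp1

lemma rpow_sub_le {p : ℝ} (hp : 0 ≤ p) (hp1 : p ≤ 1) {a b : ℝ} (hb : 0 ≤ b) (hba : b ≤ a) :
    a ^ p ≤ (a - b) ^ p + b ^ p := by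
  have h0 : 0 ≤ a - b := by linarith
  have key := NNReal.rpow_add_le_add_rpow (Real.toNNReal (a - b)) (Real.toNNReal b) hp hp1
  have hcoe : ((Real.toNNReal (a - b) + Real.toNNReal b : ℝ≥0) : ℝ) = a := by
    push_cast [Real.coe_toNNReal _ h0, Real.coe_toNNReal _ hb]; ring
  calc a ^ p = (((Real.toNNReal (a - b) + Real.toNNReal b : ℝ≥0) : ℝ)) ^ p := by rw [hcoe]
    _ = (((Real.toNNReal (a - b) + Real.toNNReal b : ℝ≥0) ^ p : ℝ≥0) : ℝ) := by
        rw [NNReal.coe_rpow]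
    _ ≤ ((Real.toNNReal (a - b) ^ p + Real.toNNReal b ^ p : ℝ≥0) : ℝ) := by
        exact_mod_cast key
    _ = (a - b) ^ p + b ^ p := by
        push_cast [NNReal.coe_rpow, Real.coe_toNNReal _ h0, Real.coe_toNNReal _ hb]; ring

set_option maxHeartbeats 1000000 in
/-- Two-variable step: if `X` and `Y` are independent nonnegative random variables whose tails
both satisfy `-log P(· > x) ∼ c x^p` with `0 < p < 1`, then so does the tail of `X + Y`. -/
lemma step (μ : Measure Ω) [IsProbabilityMeasure μ] (X Y : Ω → ℝ)
    (hXnn : ∀ ω, 0 ≤ X ω) (hYnn : ∀ ω, 0 ≤ Y ω)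
    (hind : IndepFun X Y μ) {c p : ℝ} (hc : 0 < c) (hp : 0 < p) (hp1 : p < 1)
    (hX : Tendsto (fun x : ℝ => (-Real.log ((μ {ω | X ω > x}).toReal)) / (c * x ^ p))
      atTop (nhds 1))
    (hY : Tendsto (fun x : ℝ => (-Real.log ((μ {ω | Y ω > x}).toReal)) / (c * x ^ p))
      atTop (nhds 1)) :
    Tendsto (fun x : ℝ => (-Real.log ((μ {ω | X ω + Y ω > x}).toReal)) / (c * x ^ p))
      atTop (nhds 1) := by
  rw [tendsto_order]
  constructor
  · -- lower bound
    intro a ha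
    set ε : ℝ := min (1 - a) (1 / 2) with hε_def
    have hε : 0 < ε := lt_min (by linarith) (by norm_num)
    have hε1 : ε ≤ 1 / 2 := min_le_right _ _
    have haε : a ≤ 1 - ε := by
      have := min_le_left (1 - a) (1 / 2); simp only [hε_def]; linarith
    set ε₀ : ℝ := ε / 8 with hε₀_def
    have hε₀ : 0 < ε₀ := by positivity
    have hε₀1 : ε₀ ≤ 1 / 16 := by simp only [hε₀_def]; linarith
    set δ : ℝ := ε₀ / 2 with hδ_def
    have hδ : 0 < δ := by positivity
    have hδ1 : δ ≤ 1 / 32 := by simp only [hδ_def]; linarith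
    set η : ℝ := min δ (ε₀ ^ (1 / p)) with hη_def
    have hη : 0 < η := lt_min hδ (Real.rpow_pos_of_pos hε₀ _)
    have hηδ : η ≤ δ := min_le_left _ _
    have hηp : η ^ p ≤ ε₀ := by
      calc η ^ p ≤ (ε₀ ^ (1 / p)) ^ p :=
            Real.rpow_le_rpow hη.le (min_le_right _ _) hp.le
        _ = ε₀ := by
            rw [← Real.rpow_mul hε₀.le, one_div, inv_mul_cancel₀ hp.ne', Real.rpow_one]
    set N : ℕ := ⌈1 / η⌉₊ with hN_def
    have hN1 : 1 ≤ N := Nat.one_le_ceil_iff.mpr (by positivity)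
    have hNη : 1 ≤ (N : ℝ) * η := by
      have h1 := Nat.le_ceil (1 / η)
      rw [div_le_iff₀ hη] at h1
      calc (1 : ℝ) ≤ ⌈1 / η⌉₊ * η := h1
        _ = (N : ℝ) * η := by rw [hN_def]
    set s : ℕ → ℝ := fun j => δ + j * η with hs_def
    set u : ℕ → ℝ := fun j => max (1 - s (j + 1)) δ with hu_def
    have hs_ge : ∀ j, δ ≤ s j := fun j => le_add_of_nonneg_right (by positivity)
    have hs_succ : ∀ j, s (j + 1) = s j + η := by
      intro j; simp only [hs_def]; push_cast; ring
    have hsN : (1 : ℝ) - 2 * δ ≤ s N := by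
      have : (1 : ℝ) ≤ s N := by
        simp only [hs_def]; nlinarith [hNη, hδ.le]
      linarith
    have hu_ge : ∀ j, δ ≤ u j := fun j => le_max_right _ _
    set r : ℝ := (1 - ε₀) * (1 - 2 * ε₀) with hr_def
    have hr : 1 - 3 * ε₀ ≤ r := by nlinarith [sq_nonneg ε₀]
    -- key exponent inequality
    have hkey : ∀ j < N, 1 - 2 * ε₀ ≤ s j ^ p + u j ^ p := by
      intro j hj
      have hsj : δ ≤ s j := hs_ge j
      have hsucc := hs_succ j
      by_cases hcase : δ ≤ 1 - s (j + 1)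
      · have hu : u j = 1 - s (j + 1) := max_eq_left hcase
        have h1j : s j ≤ 1 - δ - η := by rw [hsucc] at hcase; linarith
        have ha1 : s j ≤ s j ^ p := le_rpow_self hp hp1.le (by linarith) (by linarith)
        have ha2 : (1 - s j) ^ p ≤ (1 - s (j + 1)) ^ p + η ^ p := by
          have h := rpow_sub_le hp.le hp1.le hη.le (by linarith : η ≤ 1 - s j)
          have he : 1 - s j - η = 1 - s (j + 1) := by rw [hsucc]; ring
          rwa [he] at h
        have ha3 : 1 - s j ≤ (1 - s j) ^ p :=
          le_rpow_self hp hp1.le (by linarith) (by linarith)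
        rw [hu]
        linarith [hηp]
      · push_neg at hcase
        have hu : u j = δ := max_eq_right (by linarith)
        have hsj_big : 1 - 2 * δ ≤ s j := by rw [hsucc] at hcase; linarith
        have hδp : 0 ≤ δ ^ p := Real.rpow_nonneg hδ.le p
        have h2δ : 2 * δ = ε₀ := by rw [hδ_def]; ring
        rcases le_total (s j) 1 with h | h
        · have := le_rpow_self hp hp1.le (by linarith) h
          rw [hu]; linarith
        · have h1 : (1 : ℝ) ≤ s j ^ p := by
            calc (1 : ℝ) = (1 : ℝ) ^ p := (Real.one_rpow p).symm
              _ ≤ s j ^ p := Real.rpow_le_rpow (by norm_num) h hp.le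
          rw [hu]; linarith
    -- tail bounds
    obtain ⟨y₁, h₁⟩ := eventually_atTop.mp (tail_bound μ c p hc hp hX hε₀ (by linarith))
    obtain ⟨y₂, h₂⟩ := eventually_atTop.mp (tail_bound μ c p hc hp hY hε₀ (by linarith))
    set y₀ : ℝ := max y₁ y₂ with hy₀_def
    have hcxp_tendsto : Tendsto (fun x : ℝ => c * x ^ p) atTop atTop :=
      (tendsto_rpow_atTop hp).const_mul_atTop hc
    have hδx_tendsto : Tendsto (fun x : ℝ => δ * x) atTop atTop :=
      tendsto_id.const_mul_atTop hδ
    filter_upwards [hδx_tendsto.eventually_ge_atTop y₀,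
      eventually_ge_atTop y₁,
      hcxp_tendsto.eventually_ge_atTop (Real.log ((N : ℝ) + 2) / ε₀),
      eventually_gt_atTop 0] with x hδx hxy₁ hlogN' hx0
    have hcxp : 0 < c * x ^ p := mul_pos hc (Real.rpow_pos_of_pos hx0 p)
    have hlogN : Real.log ((N : ℝ) + 2) ≤ ε₀ * (c * x ^ p) := by
      rw [div_le_iff₀ hε₀] at hlogN'; linarith [hlogN']
    set E : ℝ := Real.exp (-(r * (c * x ^ p))) with hE_def
    -- individual factor bound
    have hfactor : ∀ (Z : Ω → ℝ) (y' : ℝ),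
        (∀ y ≥ y', 0 < (μ {ω | Z ω > y}).toReal ∧
          (μ {ω | Z ω > y}).toReal ≤ Real.exp (-((1 - ε₀) * (c * y ^ p)))) →
        y' ≤ y₀ → ∀ t : ℝ, δ ≤ t →
        μ (Z ⁻¹' Set.Ioi (t * x)) ≤
          ENNReal.ofReal (Real.exp (-((1 - ε₀) * (c * (t ^ p * x ^ p))))) := by
      intro Z y' hZ hy' t ht
      have hty : y' ≤ t * x := by
        have h1 : δ * x ≤ t * x := mul_le_mul_of_nonneg_right ht hx0.le
        calc y' ≤ y₀ := hy'
          _ ≤ δ * x := hδx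
          _ ≤ t * x := h1
      have h := (hZ (t * x) hty).2
      have hmul : (t * x) ^ p = t ^ p * x ^ p :=
        Real.mul_rpow (le_trans hδ.le ht) hx0.le
      rw [hmul] at h
      rw [← ENNReal.ofReal_toReal (measure_ne_top μ _)]
      exact ENNReal.ofReal_le_ofReal h
    have h₁y : y₁ ≤ y₀ := le_max_left _ _
    have h₂y : y₂ ≤ y₀ := le_max_right _ _
    -- exponent inequality for single events
    have h1ε : (0:ℝ) ≤ 1 - ε₀ := by linarith
    have hδ3 : δ ≤ 1 - 2 * δ := by linarith
    have hAexp : r * (c * x ^ p) ≤ (1 - ε₀) * (c * ((1 - 2 * δ) ^ p * x ^ p)) := by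
      have h2δ : 2 * δ = ε₀ := by rw [hδ_def]; ring
      have h1 : 1 - 2 * ε₀ ≤ (1 - 2 * δ) ^ p := by
        have := le_rpow_self hp hp1.le (by linarith : (0:ℝ) ≤ 1 - 2 * δ) (by linarith)
        linarith
      calc r * (c * x ^ p) = (1 - ε₀) * ((1 - 2 * ε₀) * (c * x ^ p)) := by rw [hr_def]; ring
        _ ≤ (1 - ε₀) * ((1 - 2 * δ) ^ p * (c * x ^ p)) := by
            apply mul_le_mul_of_nonneg_left _ h1ε
            exact mul_le_mul_of_nonneg_right h1 hcxp.le
        _ = (1 - ε₀) * (c * ((1 - 2 * δ) ^ p * x ^ p)) := by ring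
    have hA : μ (X ⁻¹' Set.Ioi ((1 - 2 * δ) * x)) ≤ ENNReal.ofReal E := by
      refine le_trans (hfactor X y₁ h₁ h₁y (1 - 2 * δ) hδ3) ?_
      exact ENNReal.ofReal_le_ofReal (Real.exp_le_exp.mpr (by linarith [hAexp]))
    have hB : μ (Y ⁻¹' Set.Ioi ((1 - 2 * δ) * x)) ≤ ENNReal.ofReal E := by
      refine le_trans (hfactor Y y₂ h₂ h₂y (1 - 2 * δ) hδ3) ?_
      exact ENNReal.ofReal_le_ofReal (Real.exp_le_exp.mpr (by linarith [hAexp]))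
    have hR : ∀ j ∈ Finset.range N,
        μ (X ⁻¹' Set.Ioi (s j * x) ∩ Y ⁻¹' Set.Ioi (u j * x)) ≤ ENNReal.ofReal E := by
      intro j hj
      have hjN := Finset.mem_range.mp hj
      have hmul := hind.measure_inter_preimage_eq_mul (Set.Ioi (s j * x)) (Set.Ioi (u j * x))
        measurableSet_Ioi measurableSet_Ioi
      rw [hmul]
      calc μ (X ⁻¹' Set.Ioi (s j * x)) * μ (Y ⁻¹' Set.Ioi (u j * x))
          ≤ ENNReal.ofReal (Real.exp (-((1 - ε₀) * (c * (s j ^ p * x ^ p))))) *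
            ENNReal.ofReal (Real.exp (-((1 - ε₀) * (c * (u j ^ p * x ^ p))))) :=
            mul_le_mul' (hfactor X y₁ h₁ h₁y (s j) (hs_ge j))
              (hfactor Y y₂ h₂ h₂y (u j) (hu_ge j))
        _ = ENNReal.ofReal (Real.exp (-((1 - ε₀) * (c * (s j ^ p * x ^ p)) +
              (1 - ε₀) * (c * (u j ^ p * x ^ p))))) := by
            rw [← ENNReal.ofReal_mul (Real.exp_nonneg _), ← Real.exp_add]
            ring_nf
        _ ≤ ENNReal.ofReal E := by
            apply ENNReal.ofReal_le_ofReal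
            apply Real.exp_le_exp.mpr
            have hkj := hkey j hjN
            have : r * (c * x ^ p) ≤
                (1 - ε₀) * (c * (s j ^ p * x ^ p)) + (1 - ε₀) * (c * (u j ^ p * x ^ p)) := by
              calc r * (c * x ^ p) = ((1 - ε₀) * (c * x ^ p)) * (1 - 2 * ε₀) := by
                    rw [hr_def]; ring
                _ ≤ ((1 - ε₀) * (c * x ^ p)) * (s j ^ p + u j ^ p) :=
                    mul_le_mul_of_nonneg_left hkj (mul_nonneg h1ε hcxp.le)
                _ = (1 - ε₀) * (c * (s j ^ p * x ^ p)) +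
                    (1 - ε₀) * (c * (u j ^ p * x ^ p)) := by ring
            linarith
    -- the covering
    have hcover : {ω | X ω + Y ω > x} ⊆
        (X ⁻¹' Set.Ioi ((1 - 2 * δ) * x) ∪ Y ⁻¹' Set.Ioi ((1 - 2 * δ) * x)) ∪
          ⋃ j ∈ Finset.range N, (X ⁻¹' Set.Ioi (s j * x) ∩ Y ⁻¹' Set.Ioi (u j * x)) := by
      intro ω hω
      simp only [Set.mem_setOf_eq] at hω
      by_cases hA' : (1 - 2 * δ) * x < X ω
      · exact Or.inl (Or.inl hA')
      by_cases hB' : (1 - 2 * δ) * x < Y ω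
      · exact Or.inl (Or.inr hB')
      push_neg at hA' hB'
      right
      have hδx0 : 0 < δ * x := mul_pos hδ hx0
      have e1 : (1 - 2 * δ) * x = x - 2 * (δ * x) := by ring
      have hX2 : 2 * (δ * x) < X ω := by linarith
      have hY2 : 2 * (δ * x) < Y ω := by linarith
      classical
      have hP0 : s 0 * x < X ω := by
        have : s 0 = δ := by simp [hs_def]
        rw [this]; linarith
      set j₀ := Nat.findGreatest (fun j => s j * x < X ω) (N - 1) with hj₀_def
      have hj₀le : j₀ ≤ N - 1 := Nat.findGreatest_le _
      have hj₀P : s j₀ * x < X ω :=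
        Nat.findGreatest_spec (P := fun j => s j * x < X ω) (Nat.zero_le _) hP0
      have hj₀N : j₀ < N := lt_of_le_of_lt hj₀le (Nat.sub_lt hN1 one_pos)
      have hY1 : (1 - s (j₀ + 1)) * x < Y ω := by
        rcases eq_or_lt_of_le hj₀le with he | hlt
        · have hj1 : j₀ + 1 = N := by omega
          rw [hj1]
          have h8 := mul_le_mul_of_nonneg_right (by linarith [hsN] : 1 - s N ≤ 2 * δ) hx0.le
          have e2 : (2 * δ) * x = 2 * (δ * x) := by ring
          linarith
        · have hnot : ¬ (s (j₀ + 1) * x < X ω) :=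
            Nat.findGreatest_is_greatest (Nat.lt_succ_self j₀) (by omega)
          push_neg at hnot
          have e3 : (1 - s (j₀ + 1)) * x = x - s (j₀ + 1) * x := by ring
          linarith
      have hYδ : δ * x < Y ω := by linarith
      refine Set.mem_biUnion (Finset.mem_range.mpr hj₀N) ⟨hj₀P, ?_⟩
      show u j₀ * x < Y ω
      calc u j₀ * x = max ((1 - s (j₀ + 1)) * x) (δ * x) := by
            rw [hu_def]; exact max_mul_of_nonneg _ _ hx0.le
        _ < Y ω := max_lt hY1 hYδ
    -- the measure bound
    have hμ : μ {ω | X ω + Y ω > x} ≤ ((N : ℝ≥0∞) + 2) * ENNReal.ofReal E := by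
      calc μ {ω | X ω + Y ω > x}
          ≤ μ ((X ⁻¹' Set.Ioi ((1 - 2 * δ) * x) ∪ Y ⁻¹' Set.Ioi ((1 - 2 * δ) * x)) ∪
              ⋃ j ∈ Finset.range N,
                (X ⁻¹' Set.Ioi (s j * x) ∩ Y ⁻¹' Set.Ioi (u j * x))) := measure_mono hcover
        _ ≤ μ (X ⁻¹' Set.Ioi ((1 - 2 * δ) * x) ∪ Y ⁻¹' Set.Ioi ((1 - 2 * δ) * x)) +
            μ (⋃ j ∈ Finset.range N,
                (X ⁻¹' Set.Ioi (s j * x) ∩ Y ⁻¹' Set.Ioi (u j * x))) := measure_union_le _ _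
        _ ≤ (μ (X ⁻¹' Set.Ioi ((1 - 2 * δ) * x)) + μ (Y ⁻¹' Set.Ioi ((1 - 2 * δ) * x))) +
            ∑ j ∈ Finset.range N,
              μ (X ⁻¹' Set.Ioi (s j * x) ∩ Y ⁻¹' Set.Ioi (u j * x)) :=
            add_le_add (measure_union_le _ _) (measure_biUnion_finset_le _ _)
        _ ≤ (ENNReal.ofReal E + ENNReal.ofReal E) +
            ∑ _j ∈ Finset.range N, ENNReal.ofReal E :=
            add_le_add (add_le_add hA hB) (Finset.sum_le_sum hR)
        _ = ((N : ℝ≥0∞) + 2) * ENNReal.ofReal E := by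
            rw [Finset.sum_const, Finset.card_range, nsmul_eq_mul]; ring
    set Q := (μ {ω | X ω + Y ω > x}).toReal with hQ_def
    have hQle : Q ≤ ((N : ℝ) + 2) * E := by
      have hne : ((N : ℝ≥0∞) + 2) * ENNReal.ofReal E ≠ ⊤ :=
        ENNReal.mul_ne_top (by simp) ENNReal.ofReal_ne_top
      have := ENNReal.toReal_mono hne hμ
      rwa [ENNReal.toReal_mul, ENNReal.toReal_ofReal (Real.exp_nonneg _),
        show ((N : ℝ≥0∞) + 2).toReal = (N : ℝ) + 2 by
          rw [ENNReal.toReal_add (ENNReal.natCast_ne_top N) (by norm_num),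
            ENNReal.toReal_natCast]
          norm_num] at this
    have hQpos : 0 < Q := by
      have hsub : {ω | X ω > x} ⊆ {ω | X ω + Y ω > x} := fun ω h =>
        lt_of_lt_of_le h (le_add_of_nonneg_right (hYnn ω))
      exact lt_of_lt_of_le (h₁ x hxy₁).1
        (ENNReal.toReal_mono (measure_ne_top μ _) (measure_mono hsub))
    have hlogQ : r * (c * x ^ p) - Real.log ((N : ℝ) + 2) ≤ -Real.log Q := by
      have h7 : Real.log Q ≤ Real.log (((N : ℝ) + 2) * E) := Real.log_le_log hQpos hQle
      rw [Real.log_mul (by positivity) (Real.exp_ne_zero _), Real.log_exp] at h7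
      linarith
    rw [lt_div_iff₀ hcxp]
    have hrC : (1 - 3 * ε₀) * (c * x ^ p) ≤ r * (c * x ^ p) :=
      mul_le_mul_of_nonneg_right hr hcxp.le
    have haC : a * (c * x ^ p) ≤ (1 - 8 * ε₀) * (c * x ^ p) := by
      apply mul_le_mul_of_nonneg_right _ hcxp.le
      have : ε = 8 * ε₀ := by rw [hε₀_def]; ring
      linarith
    have hpos4 : 0 < ε₀ * (c * x ^ p) := mul_pos hε₀ hcxp
    have e4 : (1 - 3 * ε₀) * (c * x ^ p) = (c * x ^ p) - 3 * (ε₀ * (c * x ^ p)) := by ring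
    have e5 : (1 - 8 * ε₀) * (c * x ^ p) = (c * x ^ p) - 8 * (ε₀ * (c * x ^ p)) := by ring
    linarith [hlogQ, hlogN, hrC, haC, hpos4, e4, e5]
  · -- upper bound
    intro a ha
    filter_upwards [hX.eventually (eventually_lt_nhds ha),
      tail_bound μ c p hc hp hX (by norm_num : (0:ℝ) < 1/2) (by norm_num),
      eventually_gt_atTop 0] with x h1 h2 hx0
    obtain ⟨hpos, -⟩ := h2
    have hcxp : 0 < c * x ^ p := mul_pos hc (Real.rpow_pos_of_pos hx0 p)
    have hPle : (μ {ω | X ω > x}).toReal ≤ (μ {ω | X ω + Y ω > x}).toReal := by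
      apply ENNReal.toReal_mono (measure_ne_top μ _)
      apply measure_mono
      exact fun ω h => lt_of_lt_of_le h (le_add_of_nonneg_right (hYnn ω))
    have hlog : Real.log ((μ {ω | X ω > x}).toReal) ≤
        Real.log ((μ {ω | X ω + Y ω > x}).toReal) := Real.log_le_log hpos hPle
    calc (-Real.log ((μ {ω | X ω + Y ω > x}).toReal)) / (c * x ^ p)
        ≤ (-Real.log ((μ {ω | X ω > x}).toReal)) / (c * x ^ p) :=
          (div_le_div_iff_of_pos_right hcxp).mpr (by linarith)
      _ < a := h1

end Aux

/-- For a fixed number `k` of i.i.d. nonnegative random variables with Weibull-like tail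
`-log Pr(V₁ > x) ∼ c x^p` (`0 < p < 1`), the sum has the same logarithmic tail asymptotics:
`-log Pr(V₁ + ⋯ + V_k > x) ∼ c x^p` as `x → ∞`. -/
theorem stmt_3
    {Ω : Type*} [MeasurableSpace Ω] (μ : Measure Ω) [IsProbabilityMeasure μ]
    (k : ℕ) (hk : 1 ≤ k) (V : Fin k → Ω → ℝ)
    (hVmeas : ∀ i, Measurable (V i)) (hVnn : ∀ i ω, 0 ≤ V i ω)
    (hiid : iIndepFun V μ)
    (hident : ∀ i : Fin k, Measure.map (V i) μ = Measure.map (V ⟨0, hk⟩) μ)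
    (c p : ℝ) (hc : 0 < c) (hp : 0 < p) (hp1 : p < 1)
    (htail :
      Tendsto
        (fun x : ℝ => (-Real.log ((μ {ω | V ⟨0, hk⟩ ω > x}).toReal)) / (c * x ^ p))
        atTop (nhds 1)) :
    Tendsto
      (fun x : ℝ => (-Real.log ((μ {ω | (∑ i, V i ω) > x}).toReal)) / (c * x ^ p))
      atTop (nhds 1) := by
  -- each V i has the same tail as V ⟨0, hk⟩
  have hident' : ∀ (i : Fin k) (x : ℝ), μ {ω | V i ω > x} = μ {ω | V ⟨0, hk⟩ ω > x} := by
    intro i x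
    have h1 : μ {ω | V i ω > x} = Measure.map (V i) μ (Set.Ioi x) :=
      (Measure.map_apply (hVmeas i) measurableSet_Ioi).symm
    have h2 : μ {ω | V ⟨0, hk⟩ ω > x} = Measure.map (V ⟨0, hk⟩) μ (Set.Ioi x) :=
      (Measure.map_apply (hVmeas _) measurableSet_Ioi).symm
    rw [h1, h2, hident i]
  have htail' : ∀ i : Fin k,
      Tendsto (fun x : ℝ => (-Real.log ((μ {ω | V i ω > x}).toReal)) / (c * x ^ p))
        atTop (nhds 1) := by
    intro i
    have : (fun x : ℝ => (-Real.log ((μ {ω | V i ω > x}).toReal)) / (c * x ^ p)) =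
        fun x : ℝ => (-Real.log ((μ {ω | V ⟨0, hk⟩ ω > x}).toReal)) / (c * x ^ p) := by
      funext x; rw [hident' i x]
    rw [this]; exact htail
  -- induction over nonempty finsets
  have hsum : ∀ (t : Finset (Fin k)), t.Nonempty →
      Tendsto (fun x : ℝ => (-Real.log ((μ {ω | (∑ i ∈ t, V i ω) > x}).toReal)) / (c * x ^ p))
        atTop (nhds 1) := by
    intro t ht
    induction ht using Finset.Nonempty.cons_induction with
    | singleton a =>
        simpa using htail' a
    | cons a t hat ht ih =>
        have hYm : Measurable (fun ω => ∑ i ∈ t, V i ω) :=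
          Finset.measurable_sum t (fun i _ => hVmeas i)
        have hind : IndepFun (V a) (fun ω => ∑ i ∈ t, V i ω) μ := by
          have h := (hiid.indepFun_finsetSum_of_notMem hVmeas hat).symm
          have heq : (∑ j ∈ t, V j) = fun ω => ∑ i ∈ t, V i ω := by
            funext ω; simp [Finset.sum_apply]
          rwa [heq] at h
        have hstep := step μ (V a) (fun ω => ∑ i ∈ t, V i ω)
          (hVnn a) (fun ω => Finset.sum_nonneg (fun i _ => hVnn i ω))
          hind hc hp hp1 (htail' a) ih
        have : ∀ ω, (∑ i ∈ Finset.cons a t hat, V i ω) = V a ω + ∑ i ∈ t, V i ω := by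
          intro ω; rw [Finset.sum_cons]
        simpa only [this] using hstep
  have huniv : (Finset.univ : Finset (Fin k)).Nonempty := ⟨⟨0, hk⟩, Finset.mem_univ _⟩
  exact hsum Finset.univ huniv
end

section
/- Let L and D be independent nonnegative random variables with Pr(L > x) = e^{-πλx²} (λ > 0) and Pr(D ≤ x) = 1 - (1 - x/ρ)² for 0 ≤ x ≤ ρ. Then Pr(L > D/2) = (2/ρ)∫₀^ρ e^{-πλτ²/4}(1 - τ/ρ) dτ, and consequently -log Pr(L > D/2) ∼ (1/2) log ℓ as ℓ → ∞, where ℓ = 2√3 ρ² λ. -/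
open MeasureTheory Real Filter ProbabilityTheory intervalIntegral
open Set
open scoped ENNReal NNReal

/-- real integral of the triangular density up to `m` -/
lemma tri_integral {ρ : ℝ} (hρ : 0 < ρ) {m : ℝ} (hm0 : 0 ≤ m) :
    ∫ x in Ioc 0 m, (2 / ρ * (1 - x / ρ)) = 2 * m / ρ - m ^ 2 / ρ ^ 2 := by
  rw [← intervalIntegral.integral_of_le hm0]
  have : ∀ x : ℝ, 2 / ρ * (1 - x / ρ) = 2 / ρ - (2 / ρ ^ 2) * x := by
    intro x; field_simp
  simp only [this]
  rw [integral_sub intervalIntegrable_const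
    (intervalIntegrable_id.const_mul _),
    intervalIntegral.integral_const_mul, integral_id]
  simp
  ring

/-- the density function -/
noncomputable def triDens (ρ : ℝ) : ℝ → ℝ := fun x =>
  Set.indicator (Ioc 0 ρ) (fun x => 2 / ρ * (1 - x / ρ)) x

lemma triDens_nonneg {ρ : ℝ} (hρ : 0 < ρ) (x : ℝ) : 0 ≤ triDens ρ x := by
  unfold triDens
  apply Set.indicator_nonneg
  intro y hy
  have : y / ρ ≤ 1 := (div_le_one hρ).2 hy.2
  have h2 : (0:ℝ) ≤ 2 / ρ := by positivity
  nlinarith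

lemma triDens_measurable {ρ : ℝ} : Measurable (triDens ρ) :=
  ((measurable_const.sub (measurable_id.div_const _)).const_mul _).indicator measurableSet_Ioc

noncomputable def triMeasure (ρ : ℝ) : Measure ℝ :=
  volume.withDensity (fun x => ENNReal.ofReal (triDens ρ x))

lemma triMeasure_Iic {ρ : ℝ} (hρ : 0 < ρ) (a : ℝ) :
    triMeasure ρ (Iic a) = ENNReal.ofReal (1 - (1 - min a ρ / ρ) ^ 2) := by
  rw [triMeasure, withDensity_apply _ measurableSet_Iic]
  unfold triDens
  have hind : ∀ x : ℝ, ENNReal.ofReal (Set.indicator (Ioc 0 ρ) (fun x => 2 / ρ * (1 - x / ρ)) x)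
      = Set.indicator (Ioc 0 ρ) (fun x => ENNReal.ofReal (2 / ρ * (1 - x / ρ))) x := by
    intro x
    by_cases hx : x ∈ Ioc 0 ρ <;> simp [hx]
  simp only [hind]
  rw [lintegral_indicator measurableSet_Ioc, Measure.restrict_restrict measurableSet_Ioc,
    Ioc_inter_Iic]
  rcases le_or_gt a 0 with ha | ha
  · have h1 : Ioc (0:ℝ) (ρ ⊓ a) = ∅ := Ioc_eq_empty (by simp; intro h; linarith [min_le_right ρ a])
    have h2 : min a ρ = a := min_eq_left (ha.trans hρ.le)
    rw [h1, h2]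
    simp only [Measure.restrict_empty, lintegral_zero_measure]
    symm
    rw [ENNReal.ofReal_eq_zero]
    have hdiv : a / ρ ≤ 0 := div_nonpos_of_nonpos_of_nonneg ha hρ.le
    nlinarith
  · set m := min a ρ with hm
    have hm0 : 0 ≤ m := le_min ha.le hρ.le
    have hmρ : m ≤ ρ := min_le_right _ _
    have hcomm : ρ ⊓ a = m := min_comm ρ a
    rw [hcomm]
    rw [← ofReal_integral_eq_lintegral_ofReal]
    · rw [tri_integral hρ hm0]
      congr 1
      field_simp
      ring
    · apply (Continuous.integrableOn_Ioc (by continuity))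
    · filter_upwards [ae_restrict_mem measurableSet_Ioc] with x hx
      have h1 : x / ρ ≤ 1 := (div_le_one hρ).2 (hx.2.trans hmρ)
      have h2 : (0:ℝ) ≤ 2 / ρ := by positivity
      show (0:ℝ) ≤ 2 / ρ * (1 - x / ρ)
      nlinarith

lemma toReal_eq_imp {x : ℝ≥0∞} (hx : x ≠ ⊤) {r : ℝ} (h : x.toReal = r) :
    x = ENNReal.ofReal r := by
  rw [← h, ENNReal.ofReal_toReal hx]

lemma mapD_eq {Ω : Type*} [MeasurableSpace Ω] (μ : Measure Ω) [IsProbabilityMeasure μ]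
    (D : Ω → ℝ) (hD : Measurable D) (hDnn : ∀ ω, 0 ≤ D ω) {ρ : ℝ} (hρ : 0 < ρ)
    (hcdfD : ∀ x : ℝ, 0 ≤ x → x ≤ ρ → (μ {ω | D ω ≤ x}).toReal = 1 - (1 - x / ρ) ^ 2) :
    μ.map D = triMeasure ρ := by
  have : IsProbabilityMeasure (μ.map D) := Measure.isProbabilityMeasure_map hD.aemeasurable
  apply MeasureTheory.Measure.ext_of_Iic
  intro a
  rw [Measure.map_apply hD measurableSet_Iic, triMeasure_Iic hρ]
  have hset : D ⁻¹' Iic a = {ω | D ω ≤ a} := rfl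
  rw [hset]
  rcases lt_or_ge a 0 with ha | ha
  · have he : {ω | D ω ≤ a} = ∅ := by
      ext ω; simp only [Set.mem_setOf_eq, Set.mem_empty_iff_false, iff_false, not_le]
      exact lt_of_lt_of_le ha (hDnn ω)
    rw [he, measure_empty]
    symm
    rw [ENNReal.ofReal_eq_zero]
    have hmin : min a ρ = a := min_eq_left (ha.le.trans hρ.le)
    rw [hmin]
    have : a / ρ ≤ 0 := div_nonpos_of_nonpos_of_nonneg ha.le hρ.le
    nlinarith
  · rcases le_or_gt a ρ with haρ | haρ
    · have hmin : min a ρ = a := min_eq_left haρ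
      rw [hmin]
      exact toReal_eq_imp (measure_ne_top _ _) (hcdfD a ha haρ)
    · have hmin : min a ρ = ρ := min_eq_right haρ.le
      rw [hmin]
      have h1 : μ {ω | D ω ≤ ρ} = 1 := by
        have := toReal_eq_imp (measure_ne_top μ {ω | D ω ≤ ρ})
          (hcdfD ρ hρ.le le_rfl)
        rw [this]
        rw [div_self hρ.ne']
        norm_num
      have hsub : {ω | D ω ≤ ρ} ⊆ {ω | D ω ≤ a} := fun ω h => le_trans h haρ.le
      have h2 : (1:ℝ≥0∞) ≤ μ {ω | D ω ≤ a} := h1 ▸ measure_mono hsub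
      have h3 : μ {ω | D ω ≤ a} ≤ 1 := prob_le_one
      have : μ {ω | D ω ≤ a} = 1 := le_antisymm h3 h2
      rw [this, div_self hρ.ne']
      norm_num

lemma part1 {Ω : Type*} [MeasurableSpace Ω] (μ : Measure Ω) [IsProbabilityMeasure μ]
    (L D : Ω → ℝ) (hL : Measurable L) (hD : Measurable D)
    {lam ρ : ℝ} (hlam : 0 < lam) (hρ : 0 < ρ)
    (hDnn : ∀ ω, 0 ≤ D ω) (hind : IndepFun L D μ)
    (htailL : ∀ x : ℝ, 0 ≤ x → (μ {ω | L ω > x}).toReal = Real.exp (-(π * lam * x ^ 2)))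
    (hcdfD : ∀ x : ℝ, 0 ≤ x → x ≤ ρ → (μ {ω | D ω ≤ x}).toReal = 1 - (1 - x / ρ) ^ 2) :
    (μ {ω | L ω > D ω / 2}).toReal =
      (2 / ρ) * ∫ τ in (0:ℝ)..ρ, Real.exp (-(π * lam * τ ^ 2 / 4)) * (1 - τ / ρ) := by
  set G : ℝ → ℝ := fun d => Real.exp (-(π * lam * d ^ 2 / 4)) with hG
  have hGcont : Continuous G := by
    apply Real.continuous_exp.comp
    continuity
  set ν : Measure ℝ := μ.map D with hνdef
  have hνprob : IsProbabilityMeasure ν := Measure.isProbabilityMeasure_map hD.aemeasurable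
  have hν : ν = triMeasure ρ := mapD_eq μ D hD hDnn hρ hcdfD
  have hmeas : MeasurableSet {p : ℝ × ℝ | p.2 / 2 < p.1} :=
    measurableSet_lt (measurable_snd.div_const 2) measurable_fst
  -- step 1 : express as lintegral over ν
  have step1 : μ {ω | L ω > D ω / 2} = ∫⁻ d, ENNReal.ofReal (G d) ∂ν := by
    have hmap : μ.map (fun ω => (L ω, D ω)) = (μ.map L).prod (μ.map D) :=
      (ProbabilityTheory.indepFun_iff_map_prod_eq_prod_map_map hL.aemeasurable
        hD.aemeasurable).mp hind
    have h1 : μ {ω | L ω > D ω / 2}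
        = μ.map (fun ω => (L ω, D ω)) {p : ℝ × ℝ | p.2 / 2 < p.1} := by
      rw [Measure.map_apply (hL.prodMk hD) hmeas]
      rfl
    rw [h1, hmap, Measure.prod_apply_symm hmeas]
    apply lintegral_congr_ae
    have hae : ∀ᵐ d ∂ν, 0 ≤ d := by
      rw [hνdef]
      rw [ae_map_iff hD.aemeasurable measurableSet_Ici]
      filter_upwards with ω using hDnn ω
    filter_upwards [hae] with d hd
    have hpre : (fun l => (l, d)) ⁻¹' {p : ℝ × ℝ | p.2 / 2 < p.1} = Ioi (d / 2) := rfl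
    rw [hpre, Measure.map_apply hL measurableSet_Ioi]
    have h2 := toReal_eq_imp (measure_ne_top μ _) (htailL (d / 2) (by positivity))
    have h3 : L ⁻¹' Ioi (d / 2) = {ω | L ω > d / 2} := rfl
    rw [h3, h2]
    congr 1
    rw [hG]
    ring_nf
  -- step 2 : to a Bochner integral over ν
  have step2 : (μ {ω | L ω > D ω / 2}).toReal = ∫ d, G d ∂ν := by
    rw [step1]
    rw [integral_eq_lintegral_of_nonneg_ae
      (Filter.Eventually.of_forall fun d => Real.exp_nonneg _)
      hGcont.aestronglyMeasurable]
  rw [step2, hν]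
  -- step 3 : unfold the density
  have hdens : triMeasure ρ
      = volume.withDensity (fun x => ((Real.toNNReal (triDens ρ x) : ℝ≥0) : ℝ≥0∞)) := rfl
  rw [hdens, integral_withDensity_eq_integral_smul
    (triDens_measurable.real_toNNReal) G]
  have step4 : ∀ x : ℝ, (Real.toNNReal (triDens ρ x)) • G x = triDens ρ x * G x := by
    intro x
    rw [NNReal.smul_def, Real.coe_toNNReal _ (triDens_nonneg hρ x), smul_eq_mul]
  simp only [step4]
  -- step 5 : to an interval integral
  have step5 : ∫ x, triDens ρ x * G x
      = ∫ x in Ioc 0 ρ, (2 / ρ * (1 - x / ρ)) * G x := by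
    rw [← MeasureTheory.integral_indicator measurableSet_Ioc]
    congr 1
    funext x
    by_cases hx : x ∈ Ioc 0 ρ <;> simp [triDens, hx]
  rw [step5, ← intervalIntegral.integral_of_le hρ.le]
  have step6 : ∀ x : ℝ, (2 / ρ * (1 - x / ρ)) * G x = (2 / ρ) * (G x * (1 - x / ρ)) := by
    intro x; ring
  simp only [step6]
  rw [intervalIntegral.integral_const_mul]

lemma gauss_integrable {lam : ℝ} (hlam : 0 < lam) :
    Integrable (fun x : ℝ => Real.exp (-(π * lam * x ^ 2 / 4))) := by
  have h : (fun x : ℝ => Real.exp (-(π * lam * x ^ 2 / 4)))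
      = fun x : ℝ => Real.exp (-(π * lam / 4) * x ^ 2) := by
    funext x; ring_nf
  rw [h]
  exact integrable_exp_neg_mul_sq (b := π * lam / 4) (by positivity)

lemma C_lower {lam : ℝ} (hlam : 0 < lam) {ρ : ℝ} (hρ : 2 ≤ ρ) :
    Real.exp (-(π * lam / 4)) / 2
      ≤ ∫ τ in (0:ℝ)..ρ, Real.exp (-(π * lam * τ ^ 2 / 4)) * (1 - τ / ρ) := by
  have hρ0 : (0:ℝ) < ρ := lt_of_lt_of_le two_pos hρ
  have hcont : Continuous (fun τ : ℝ => Real.exp (-(π * lam * τ ^ 2 / 4)) * (1 - τ / ρ)) := by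
    apply Continuous.mul
    · apply Real.continuous_exp.comp; continuity
    · continuity
  have hsplit := intervalIntegral.integral_add_adjacent_intervals
    (hcont.intervalIntegrable 0 1) (hcont.intervalIntegrable 1 ρ) (μ := volume)
  rw [← hsplit]
  have h2 : 0 ≤ ∫ τ in (1:ℝ)..ρ, Real.exp (-(π * lam * τ ^ 2 / 4)) * (1 - τ / ρ) := by
    apply intervalIntegral.integral_nonneg (by linarith)
    intro u hu
    have h1 : u / ρ ≤ 1 := (div_le_one hρ0).2 hu.2
    have := Real.exp_nonneg (-(π * lam * u ^ 2 / 4))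
    nlinarith
  have h1 : Real.exp (-(π * lam / 4)) / 2
      ≤ ∫ τ in (0:ℝ)..1, Real.exp (-(π * lam * τ ^ 2 / 4)) * (1 - τ / ρ) := by
    have hmono := intervalIntegral.integral_mono_on (a := (0:ℝ)) (b := 1)
      (μ := volume) zero_le_one intervalIntegrable_const (hcont.intervalIntegrable 0 1)
      (g := fun τ : ℝ => Real.exp (-(π * lam * τ ^ 2 / 4)) * (1 - τ / ρ))
      (f := fun _ => Real.exp (-(π * lam / 4)) / 2) ?_
    · simpa using hmono
    · intro x hx
      have hx0 := hx.1
      have hx1 := hx.2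
      have he : Real.exp (-(π * lam / 4)) ≤ Real.exp (-(π * lam * x ^ 2 / 4)) := by
        apply Real.exp_le_exp.2
        have hx2 : x ^ 2 ≤ 1 := by nlinarith
        have hpl := mul_pos Real.pi_pos hlam
        nlinarith
      have hb : (1:ℝ)/2 ≤ 1 - x / ρ := by
        have : x / ρ ≤ 1 / 2 := by
          rw [div_le_div_iff₀ hρ0 two_pos]
          nlinarith
        linarith
      calc Real.exp (-(π * lam / 4)) / 2 = Real.exp (-(π * lam / 4)) * (1/2) := by ring
        _ ≤ Real.exp (-(π * lam * x ^ 2 / 4)) * (1 - x / ρ) :=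
            mul_le_mul he hb (by norm_num) (Real.exp_nonneg _)
  linarith

lemma C_upper {lam : ℝ} (hlam : 0 < lam) {ρ : ℝ} (hρ0 : 0 < ρ) :
    (∫ τ in (0:ℝ)..ρ, Real.exp (-(π * lam * τ ^ 2 / 4)) * (1 - τ / ρ))
      ≤ ∫ x : ℝ, Real.exp (-(π * lam * x ^ 2 / 4)) := by
  have hcont : Continuous (fun τ : ℝ => Real.exp (-(π * lam * τ ^ 2 / 4)) * (1 - τ / ρ)) := by
    apply Continuous.mul
    · apply Real.continuous_exp.comp; continuity
    · continuity
  have hGcont : Continuous (fun τ : ℝ => Real.exp (-(π * lam * τ ^ 2 / 4))) := by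
    apply Real.continuous_exp.comp; continuity
  rw [intervalIntegral.integral_of_le hρ0.le]
  calc (∫ τ in Ioc (0:ℝ) ρ, Real.exp (-(π * lam * τ ^ 2 / 4)) * (1 - τ / ρ))
      ≤ ∫ τ in Ioc (0:ℝ) ρ, Real.exp (-(π * lam * τ ^ 2 / 4)) := by
        apply setIntegral_mono_on (hcont.integrableOn_Ioc) (hGcont.integrableOn_Ioc)
          measurableSet_Ioc
        intro x hx
        have h1 : 0 < x / ρ := div_pos hx.1 hρ0
        have := Real.exp_nonneg (-(π * lam * x ^ 2 / 4))
        nlinarith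
    _ ≤ ∫ x : ℝ, Real.exp (-(π * lam * x ^ 2 / 4)) := by
        apply setIntegral_le_integral (gauss_integrable hlam)
        filter_upwards with x using Real.exp_nonneg _

lemma part2 {lam : ℝ} (hlam : 0 < lam) (f : ℝ → ℝ)
    (hf : ∀ ρ > (0:ℝ), f ρ
      = (2 / ρ) * ∫ τ in (0:ℝ)..ρ, Real.exp (-(π * lam * τ ^ 2 / 4)) * (1 - τ / ρ)) :
    Tendsto (fun ρ : ℝ => (-Real.log (f ρ))
      / ((1/2) * Real.log (2 * Real.sqrt 3 * ρ ^ 2 * lam))) atTop (nhds 1) := by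
  set C : ℝ → ℝ := fun ρ => ∫ τ in (0:ℝ)..ρ, Real.exp (-(π * lam * τ ^ 2 / 4)) * (1 - τ / ρ)
    with hC
  set m : ℝ := Real.exp (-(π * lam / 4)) / 2 with hm
  set M : ℝ := ∫ x : ℝ, Real.exp (-(π * lam * x ^ 2 / 4)) with hM
  set c₀ : ℝ := (1/2) * Real.log (2 * Real.sqrt 3 * lam) with hc₀
  have hmpos : 0 < m := by rw [hm]; positivity
  have hmM : ∀ ρ : ℝ, 2 ≤ ρ → m ≤ C ρ ∧ C ρ ≤ M := fun ρ hρ =>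
    ⟨C_lower hlam hρ, C_upper hlam (by linarith)⟩
  have hMpos : 0 < M := lt_of_lt_of_le hmpos ((hmM 2 le_rfl).1.trans (hmM 2 le_rfl).2)
  set K : ℝ := |Real.log 2| + |Real.log m| + |Real.log M| + |c₀| with hK
  set g : ℝ → ℝ := fun ρ => (-Real.log 2 - Real.log (C ρ) - c₀) / (Real.log ρ + c₀) with hg
  have hdent : Tendsto (fun ρ : ℝ => Real.log ρ + c₀) atTop atTop :=
    tendsto_atTop_add_const_right _ c₀ Real.tendsto_log_atTop
  have hev : ∀ᶠ ρ : ℝ in atTop, 2 ≤ ρ ∧ 1 ≤ Real.log ρ + c₀ :=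
    (eventually_ge_atTop 2).and (hdent.eventually_ge_atTop 1)
  have htend0 : Tendsto g atTop (nhds 0) := by
    refine squeeze_zero_norm' ?_
      (Tendsto.div_atTop (tendsto_const_nhds (x := K)) hdent)
    · filter_upwards [hev] with ρ ⟨hρ2, hden1⟩
      have hCpos : 0 < C ρ := lt_of_lt_of_le hmpos (hmM ρ hρ2).1
      have hc1 : Real.log m ≤ Real.log (C ρ) := Real.log_le_log hmpos (hmM ρ hρ2).1
      have hc2 : Real.log (C ρ) ≤ Real.log M := Real.log_le_log hCpos (hmM ρ hρ2).2
      have hnum : |(-Real.log 2 - Real.log (C ρ) - c₀)| ≤ K := by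
        have habs : |Real.log (C ρ)| ≤ |Real.log m| + |Real.log M| := by
          rw [abs_le]
          constructor
          · linarith [neg_abs_le (Real.log m), abs_nonneg (Real.log M)]
          · linarith [le_abs_self (Real.log M), abs_nonneg (Real.log m)]
        calc |(-Real.log 2 - Real.log (C ρ) - c₀)|
            ≤ |Real.log 2| + |Real.log (C ρ)| + |c₀| := by
              have := abs_sub (-Real.log 2 - Real.log (C ρ)) c₀
              have h2 := abs_sub (-Real.log 2) (Real.log (C ρ))
              simp only [abs_neg] at h2 ⊢
              calc |(-Real.log 2 - Real.log (C ρ) - c₀)|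
                  ≤ |(-Real.log 2 - Real.log (C ρ))| + |c₀| := abs_sub _ _
                _ ≤ |Real.log 2| + |Real.log (C ρ)| + |c₀| := by
                    have := abs_sub (-Real.log 2) (Real.log (C ρ))
                    rw [abs_neg] at this
                    linarith
          _ ≤ K := by rw [hK]; linarith
      have hdenpos : 0 < Real.log ρ + c₀ := lt_of_lt_of_le one_pos hden1
      rw [hg]
      simp only [norm_div, Real.norm_eq_abs]
      rw [abs_of_pos hdenpos]
      exact div_le_div_of_nonneg_right hnum hdenpos.le
  have key : ∀ᶠ ρ : ℝ in atTop,
      (-Real.log (f ρ)) / ((1/2) * Real.log (2 * Real.sqrt 3 * ρ ^ 2 * lam)) = 1 + g ρ := by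
    filter_upwards [hev] with ρ ⟨hρ2, hden1⟩
    have hρ0 : (0:ℝ) < ρ := by linarith
    have hCpos : 0 < C ρ := lt_of_lt_of_le hmpos (hmM ρ hρ2).1
    have hs3 : (0:ℝ) < Real.sqrt 3 := Real.sqrt_pos.2 (by norm_num)
    have hlogf : Real.log (f ρ) = Real.log 2 - Real.log ρ + Real.log (C ρ) := by
      rw [hf ρ hρ0,
        show (∫ τ in (0:ℝ)..ρ, Real.exp (-(π * lam * τ ^ 2 / 4)) * (1 - τ / ρ)) = C ρ from rfl,
        Real.log_mul (by positivity) (ne_of_gt hCpos),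
        Real.log_div (two_ne_zero) (ne_of_gt hρ0)]
    have hden : (1/2) * Real.log (2 * Real.sqrt 3 * ρ ^ 2 * lam) = Real.log ρ + c₀ := by
      rw [show 2 * Real.sqrt 3 * ρ ^ 2 * lam = (2 * Real.sqrt 3 * lam) * ρ ^ 2 by ring,
        Real.log_mul (by positivity) (by positivity), Real.log_pow, hc₀]
      push_cast
      ring
    have hdenne : Real.log ρ + c₀ ≠ 0 := by linarith
    rw [hlogf, hden, hg]
    field_simp
    ring
  have h1 : Tendsto (fun ρ : ℝ => 1 + g ρ) atTop (nhds 1) := by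
    have := tendsto_const_nhds (x := (1:ℝ)) (f := atTop (α := ℝ)) |>.add htend0
    simpa using this
  exact h1.congr' (Filter.EventuallyEq.symm key)


/-- With `L, D` independent, `Pr(L > x) = exp (-π λ x²)` and
`Pr(D ≤ x) = 1 - (1 - x/ρ)²` on `[0, ρ]`, one has
`Pr(L > D/2) = (2/ρ) ∫₀^ρ exp (-π λ τ²/4) (1 - τ/ρ) dτ`, and
`-log Pr(L > D/2) ∼ (1/2) log ℓ` as `ℓ = 2√3 ρ² λ → ∞`. -/
theorem stmt_6
    {Ω : Type*} [MeasurableSpace Ω] (μ : ℝ → Measure Ω)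
    (hprob : ∀ ρ > (0 : ℝ), IsProbabilityMeasure (μ ρ))
    (L D : Ω → ℝ) (hL : Measurable L) (hD : Measurable D)
    (lam : ℝ) (hlam : 0 < lam)
    (hLnn : ∀ ω, 0 ≤ L ω) (hDnn : ∀ ω, 0 ≤ D ω)
    (hind : ∀ ρ > (0 : ℝ), IndepFun L D (μ ρ))
    (htailL : ∀ ρ > (0 : ℝ), ∀ x : ℝ, 0 ≤ x →
      ((μ ρ) {ω | L ω > x}).toReal = Real.exp (-(π * lam * x ^ 2)))
    (hcdfD : ∀ ρ > (0 : ℝ), ∀ x : ℝ, 0 ≤ x → x ≤ ρ →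
      ((μ ρ) {ω | D ω ≤ x}).toReal = 1 - (1 - x / ρ) ^ 2) :
    (∀ ρ > (0 : ℝ),
      ((μ ρ) {ω | L ω > D ω / 2}).toReal =
        (2 / ρ) * ∫ τ in (0 : ℝ)..ρ, Real.exp (-(π * lam * τ ^ 2 / 4)) * (1 - τ / ρ)) ∧
    Tendsto
      (fun ρ : ℝ =>
        (-Real.log (((μ ρ) {ω | L ω > D ω / 2}).toReal)) /
          ((1 / 2) * Real.log (2 * Real.sqrt 3 * ρ ^ 2 * lam)))
      atTop (nhds 1) := by
  have hpart1 : ∀ ρ > (0 : ℝ),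
      ((μ ρ) {ω | L ω > D ω / 2}).toReal =
        (2 / ρ) * ∫ τ in (0 : ℝ)..ρ, Real.exp (-(π * lam * τ ^ 2 / 4)) * (1 - τ / ρ) := by
    intro ρ hρ
    haveI := hprob ρ hρ
    exact part1 (μ ρ) L D hL hD hlam hρ hDnn (hind ρ hρ) (htailL ρ hρ) (hcdfD ρ hρ)
  exact ⟨hpart1, part2 hlam _ hpart1⟩
end

section
/- Let N be a random variable taking integer values ≥ ν for some integer ν ≥ 2, with Pr(N = ν) > 0. Conditioned on N = n, let W be chi-square distributed with 2n degrees of freedom (i.e. Gamma(n,1)), let G be exponential with unit mean independent of W, and let L be independent with Pr(L > x) = e^{-πλx²}. For ω > 0 and α > 2, the random variable PG where P = ωL^α/W satisfies Pr(PG > x) = E[(1 + ω⁻¹ x L^{-α})^{-N}], and Pr(PG > x) ∼ ω^ν Γ(αν/2 + 1) Pr(N = ν) (πλ)^{-αν/2} x^{-ν} as x → ∞. -/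
open MeasureTheory Real Filter ProbabilityTheory Set
open scoped ENNReal NNReal Topology

namespace Stmt9

lemma integrableOn_aux {a r : ℝ} (ha : 0 < a) (hr : 0 < r) :
    IntegrableOn (fun t : ℝ => t ^ (a - 1) * Real.exp (-(r * t))) (Ioi 0) := by
  have h := integrableOn_rpow_mul_exp_neg_mul_rpow (p := 1) (s := a - 1) (b := r)
    (by linarith) one_pos hr
  refine h.congr_fun (fun t ht => ?_) measurableSet_Ioi
  simp only [Real.rpow_one]; ring_nf

lemma lintegral_aux {a r : ℝ} (ha : 0 < a) (hr : 0 < r) :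
    ∫⁻ t in Ioi 0, ENNReal.ofReal (t ^ (a - 1) * Real.exp (-(r * t))) =
      ENNReal.ofReal ((1 / r) ^ a * Real.Gamma a) := by
  rw [← ofReal_integral_eq_lintegral_ofReal (integrableOn_aux ha hr) ?_,
    integral_rpow_mul_exp_neg_mul_Ioi ha hr]
  filter_upwards [ae_restrict_mem measurableSet_Ioi] with t ht
  exact mul_nonneg (Real.rpow_nonneg (le_of_lt ht) _) (Real.exp_nonneg _)

lemma expMeasure_apply {s : Set ℝ} (hs : MeasurableSet s) :
    expMeasure 1 s = ∫⁻ u in s, exponentialPDF 1 u := by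
  rw [expMeasure, gammaMeasure, withDensity_apply _ hs]; rfl

lemma expMeasure_Iic {t : ℝ} (ht : 0 ≤ t) :
    expMeasure 1 (Iic t) = ENNReal.ofReal (1 - Real.exp (-t)) := by
  rw [expMeasure_apply measurableSet_Iic, lintegral_exponentialPDF_eq_antiDeriv one_pos,
    if_pos ht, one_mul]

lemma expMeasure_Ioi {t : ℝ} (ht : 0 ≤ t) :
    expMeasure 1 (Ioi t) = ENNReal.ofReal (Real.exp (-t)) := by
  haveI : IsProbabilityMeasure (expMeasure 1) := isProbabilityMeasure_expMeasure one_pos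
  have h1 : (Ioi t) = (Iic t)ᶜ := by simp
  have he : Real.exp (-t) ≤ 1 := Real.exp_le_one_iff.mpr (by linarith)
  rw [h1, measure_compl measurableSet_Iic (measure_ne_top _ _), measure_univ,
    expMeasure_Iic ht]
  refine ENNReal.sub_eq_of_eq_add ENNReal.ofReal_ne_top ?_
  rw [← ENNReal.ofReal_add (Real.exp_nonneg _) (by linarith), ← ENNReal.ofReal_one]
  congr 1; ring

end Stmt9

namespace Stmt9
open ENNReal

lemma gammaMeasure_Iic_zero (n : ℕ) : gammaMeasure n 1 (Iic 0) = 0 := by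
  rw [gammaMeasure, withDensity_apply _ measurableSet_Iic,
    ← setLIntegral_congr (Iio_ae_eq_Iic (a := (0:ℝ)))]
  exact lintegral_gammaPDF_of_nonpos le_rfl

lemma gamma_laplace {n : ℕ} (hn : 0 < n) {c : ℝ} (hc : 0 ≤ c) :
    ∫⁻ w, ENNReal.ofReal (Real.exp (-(c * w))) ∂(gammaMeasure n 1) =
      ENNReal.ofReal ((1 + c) ^ (-(n : ℝ))) := by
  have hnr : (0:ℝ) < n := by exact_mod_cast hn
  have hΓ : 0 < Real.Gamma n := Real.Gamma_pos_of_pos hnr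
  have h1c : (0:ℝ) < 1 + c := by linarith
  have hmeas : Measurable fun w : ℝ => ENNReal.ofReal (Real.exp (-(c * w))) :=
    ((measurable_id.const_mul c).neg.exp).ennreal_ofReal
  have hpdf : Measurable (gammaPDF n 1) := (measurable_gammaPDFReal (n:ℝ) 1).ennreal_ofReal
  rw [gammaMeasure, lintegral_withDensity_eq_lintegral_mul volume hpdf hmeas]
  rw [← lintegral_add_compl (μ := volume) _ measurableSet_Ici, compl_Ici]
  have hIio : ∫⁻ w in Iio 0, (gammaPDF n 1 * fun w => ENNReal.ofReal (Real.exp (-(c * w)))) w = 0 := by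
    rw [setLIntegral_congr_fun (g := fun _ => 0) measurableSet_Iio]
    · exact lintegral_zero
    · intro w (hw : w < 0)
      simp [Pi.mul_apply, gammaPDF_of_neg hw]
  rw [hIio, add_zero, ← setLIntegral_congr (Ioi_ae_eq_Ici (a := (0:ℝ)))]
  have hcongr : ∀ w ∈ Ioi (0:ℝ),
      (gammaPDF n 1 * fun w => ENNReal.ofReal (Real.exp (-(c * w)))) w =
      ENNReal.ofReal ((Real.Gamma n)⁻¹) *
        ENNReal.ofReal (w ^ ((n:ℝ) - 1) * Real.exp (-((1 + c) * w))) := by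
    intro w hw
    have hw' : (0:ℝ) < w := hw
    rw [Pi.mul_apply, gammaPDF_of_nonneg (le_of_lt hw'), ← ENNReal.ofReal_mul
      (mul_nonneg (mul_nonneg (div_nonneg (by positivity) hΓ.le)
        (Real.rpow_nonneg hw'.le _)) (Real.exp_nonneg _))]
    rw [show (1:ℝ)^(n:ℝ) / Real.Gamma n * w ^ ((n:ℝ)-1) * Real.exp (-(1*w)) * Real.exp (-(c*w))
        = (Real.Gamma n)⁻¹ * (w ^ ((n:ℝ)-1) * Real.exp (-((1+c)*w))) from by
      rw [Real.one_rpow, one_div, mul_assoc, mul_assoc, ← Real.exp_add]; ring_nf]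
    rw [ENNReal.ofReal_mul (inv_nonneg.mpr hΓ.le)]
  rw [setLIntegral_congr_fun measurableSet_Ioi hcongr, lintegral_const_mul'
    _ _ ENNReal.ofReal_ne_top, lintegral_aux hnr h1c, ← ENNReal.ofReal_mul (by positivity)]
  congr 1
  rw [Real.rpow_neg h1c.le, Real.rpow_natCast, ← Real.rpow_natCast (1/(1+c)),
    Real.div_rpow zero_le_one h1c.le, Real.one_rpow, Real.rpow_natCast]
  field_simp

end Stmt9

namespace Stmt9

noncomputable def rho (lam : ℝ) : Measure ℝ :=
  Measure.map (fun u => Real.sqrt (u / (π * lam))) (expMeasure 1)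

lemma meas_g (lam : ℝ) : Measurable fun u : ℝ => Real.sqrt (u / (π * lam)) :=
  (measurable_id.div_const _).sqrt

instance rho_prob (lam : ℝ) : IsProbabilityMeasure (rho lam) := by
  haveI : IsProbabilityMeasure (expMeasure 1) := isProbabilityMeasure_expMeasure one_pos
  exact Measure.isProbabilityMeasure_map (meas_g lam).aemeasurable

lemma rho_Iic {lam : ℝ} (hlam : 0 < lam) {a : ℝ} (ha : 0 ≤ a) :
    rho lam (Iic a) = ENNReal.ofReal (1 - Real.exp (-(π * lam * a ^ 2))) := by
  have hπ : (0:ℝ) < π * lam := by positivity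
  rw [rho, Measure.map_apply (meas_g lam) measurableSet_Iic]
  have hset : (fun u : ℝ => Real.sqrt (u / (π * lam))) ⁻¹' (Iic a) = Iic (π * lam * a ^ 2) := by
    ext u
    simp only [mem_preimage, mem_Iic]
    rw [Real.sqrt_le_left ha, div_le_iff₀ hπ]
    constructor <;> intro h <;> nlinarith
  rw [hset, expMeasure_Iic (by positivity)]

lemma rho_pos {lam : ℝ} (hlam : 0 < lam) : ∀ᵐ t ∂(rho lam), 0 < t := by
  rw [ae_iff]
  have : {t : ℝ | ¬ 0 < t} = Iic 0 := by ext t; simp [not_lt]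
  rw [this, rho_Iic hlam le_rfl]
  simp

lemma rho_lintegral (lam : ℝ) {f : ℝ → ℝ≥0∞} (hf : Measurable f) :
    ∫⁻ t, f t ∂(rho lam) =
      ∫⁻ u in Ioi 0, f (Real.sqrt (u / (π * lam))) * ENNReal.ofReal (Real.exp (-u)) := by
  rw [rho, lintegral_map hf (meas_g lam)]
  have hpdf : Measurable (exponentialPDF 1) := (measurable_exponentialPDFReal 1).ennreal_ofReal
  have h1 : expMeasure 1 = volume.withDensity (exponentialPDF 1) := rfl
  rw [h1, lintegral_withDensity_eq_lintegral_mul volume hpdf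
    (g := fun u => f (Real.sqrt (u / (π * lam)))) (hf.comp (meas_g lam))]
  rw [← lintegral_add_compl (μ := volume)
    (f := (exponentialPDF 1 * fun u => f (Real.sqrt (u / (π * lam))))) measurableSet_Ici,
    compl_Ici]
  have hIio : ∫⁻ u in Iio 0,
      (exponentialPDF 1 * fun u => f (Real.sqrt (u / (π * lam)))) u = 0 := by
    rw [setLIntegral_congr_fun (g := fun _ => 0) measurableSet_Iio]
    · exact lintegral_zero
    · intro u (hu : u < 0)
      simp [Pi.mul_apply, exponentialPDF_of_neg hu]
  rw [hIio, add_zero, ← setLIntegral_congr (Ioi_ae_eq_Ici (a := (0:ℝ)))]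
  refine setLIntegral_congr_fun measurableSet_Ioi (fun u hu => ?_)
  rw [Pi.mul_apply, exponentialPDF_of_nonneg (le_of_lt hu), one_mul, mul_comm]
  norm_num

lemma rho_moment {lam p : ℝ} (hlam : 0 < lam) (hp : 0 < p) :
    ∫⁻ t, ENNReal.ofReal (t ^ p) ∂(rho lam) =
      ENNReal.ofReal ((π * lam) ^ (-(p / 2)) * Real.Gamma (p / 2 + 1)) := by
  have hπ : (0:ℝ) < π * lam := by positivity
  rw [rho_lintegral lam (f := fun t => ENNReal.ofReal (t ^ p))
    ((measurable_id.pow_const p).ennreal_ofReal)]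
  have hcongr : ∀ u ∈ Ioi (0:ℝ),
      ENNReal.ofReal (Real.sqrt (u / (π * lam)) ^ p) * ENNReal.ofReal (Real.exp (-u)) =
      ENNReal.ofReal ((π * lam) ^ (-(p / 2))) *
        ENNReal.ofReal (u ^ (p / 2 + 1 - 1) * Real.exp (-(1 * u))) := by
    intro u hu
    have hu' : (0:ℝ) < u := hu
    rw [← ENNReal.ofReal_mul (Real.rpow_nonneg (Real.sqrt_nonneg _) _),
      ← ENNReal.ofReal_mul (Real.rpow_nonneg (by positivity) _)]
    congr 1
    have e1 : p / 2 + 1 - 1 = p / 2 := by ring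
    rw [Real.sqrt_eq_rpow, ← Real.rpow_mul (by positivity), div_mul_eq_mul_div, one_mul,
      Real.div_rpow hu'.le hπ.le, div_eq_mul_inv, ← Real.rpow_neg hπ.le, e1,
      show -(1 * u) = -u by ring]
    ring
  rw [setLIntegral_congr_fun measurableSet_Ioi hcongr,
    lintegral_const_mul' _ _ ENNReal.ofReal_ne_top,
    lintegral_aux (by positivity) one_pos, ← ENNReal.ofReal_mul (by positivity)]
  congr 1
  rw [one_div_one, Real.one_rpow, one_mul]

end Stmt9

namespace Stmt9

variable {Ω : Type*} [MeasurableSpace Ω]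

lemma map_L_eq (η : Measure Ω) [IsProbabilityMeasure η] {L : Ω → ℝ} (hL : Measurable L)
    {lam : ℝ} (hlam : 0 < lam) (hLnn : ∀ ω, 0 ≤ L ω)
    (htail : ∀ x : ℝ, 0 ≤ x → (η {ω | L ω > x}).toReal = Real.exp (-(π * lam * x ^ 2))) :
    Measure.map L η = rho lam := by
  haveI : IsProbabilityMeasure (Measure.map L η) := Measure.isProbabilityMeasure_map hL.aemeasurable
  refine Measure.ext_of_Iic _ _ (fun a => ?_)
  rcases le_or_gt 0 a with ha | ha
  · rw [Measure.map_apply hL measurableSet_Iic, rho_Iic hlam ha]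
    have hev : {ω | L ω > a} = L ⁻¹' (Ioi a) := rfl
    have h1 : η {ω | L ω > a} = ENNReal.ofReal (Real.exp (-(π * lam * a ^ 2))) := by
      rw [← ENNReal.ofReal_toReal (measure_ne_top η _), htail a ha]
    have h2 : L ⁻¹' (Iic a) = {ω | L ω > a}ᶜ := by ext ω; simp [not_lt]
    rw [h2, measure_compl (hev ▸ hL measurableSet_Ioi) (measure_ne_top _ _), h1, measure_univ]
    have hle : Real.exp (-(π * lam * a ^ 2)) ≤ 1 :=
      Real.exp_le_one_iff.mpr (neg_nonpos.mpr (by positivity))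
    refine ENNReal.sub_eq_of_eq_add ENNReal.ofReal_ne_top ?_
    rw [← ENNReal.ofReal_add (by linarith) (Real.exp_nonneg _), ← ENNReal.ofReal_one]
    congr 1; ring
  · have h2 : L ⁻¹' (Iic a) = ∅ := by
      ext ω; simp only [mem_preimage, mem_Iic, mem_empty_iff_false, iff_false, not_le]
      exact lt_of_lt_of_le ha (hLnn ω)
    rw [Measure.map_apply hL measurableSet_Iic, h2, measure_empty]
    have h3 : rho lam (Iic a) ≤ rho lam (Iic 0) := measure_mono (Iic_subset_Iic.mpr ha.le)
    rw [rho_Iic hlam le_rfl] at h3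
    norm_num at h3
    rw [h3]

end Stmt9

namespace Stmt9

variable {Ω : Type*} [MeasurableSpace Ω]

lemma cond_event_eq (η : Measure Ω) [IsProbabilityMeasure η]
    {W G L : Ω → ℝ} (hW : Measurable W) (hG : Measurable G) (hL : Measurable L)
    {ω₀ α : ℝ} (hω₀ : 0 < ω₀) (hα : 0 < α) (hLnn : ∀ ω, 0 ≤ L ω)
    (hLpos : ∀ᵐ ω ∂η, 0 < L ω)
    {n : ℕ} (hn : 0 < n)
    (hmapW : Measure.map W η = gammaMeasure n 1)
    (hmapG : Measure.map G η = expMeasure 1)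
    (hind : iIndepFun ![W, G, L] η)
    {x : ℝ} (hx : 0 < x) :
    η {ω | ω₀ * L ω ^ α * G ω / W ω > x} =
      ∫⁻ ω, ENNReal.ofReal ((1 + ω₀⁻¹ * x * L ω ^ (-α)) ^ (-(n : ℝ))) ∂η := by
  haveI hgp : IsProbabilityMeasure (gammaMeasure (n:ℝ) 1) :=
    isProbabilityMeasure_gammaMeasure (by exact_mod_cast hn) one_pos
  haveI hep : IsProbabilityMeasure (expMeasure 1) := isProbabilityMeasure_expMeasure one_pos
  have hmeas3 : ∀ i, Measurable (![W, G, L] i) := by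
    intro i; fin_cases i <;> assumption
  have hWpos : ∀ᵐ ω ∂η, 0 < W ω := by
    rw [ae_iff]
    have hset : {ω | ¬ 0 < W ω} = W ⁻¹' (Iic 0) := by ext ω; simp [not_lt]
    rw [hset, ← Measure.map_apply hW measurableSet_Iic, hmapW]
    exact gammaMeasure_Iic_zero n
  have hAB : {ω | ω₀ * L ω ^ α * G ω / W ω > x} =ᵐ[η]
      {ω | ω₀⁻¹ * x * W ω * L ω ^ (-α) < G ω} := by
    filter_upwards [hWpos, hLpos] with ω hWp hLp
    have hLa : 0 < L ω ^ α := Real.rpow_pos_of_pos hLp α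
    have key : ω₀⁻¹ * x * W ω * L ω ^ (-α) = x * W ω / (ω₀ * L ω ^ α) := by
      rw [Real.rpow_neg (hLnn ω)]; field_simp
    have h2 : (ω₀ * L ω ^ α * G ω / W ω > x) ↔ (ω₀⁻¹ * x * W ω * L ω ^ (-α) < G ω) := by
      rw [gt_iff_lt, lt_div_iff₀ hWp, key, div_lt_iff₀ (by positivity),
        mul_comm (G ω) (ω₀ * L ω ^ α)]
    exact eq_iff_iff.mpr h2
  rw [measure_congr hAB]
  -- (W, L) independent of G
  have hWL : Measurable fun ω => (W ω, L ω) := hW.prodMk hL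
  have hindp : IndepFun (fun ω => (W ω, L ω)) G η := by
    have h := hind.indepFun_prodMk hmeas3 0 2 1 (by decide) (by decide)
    simpa using h
  have hmapP : Measure.map (fun ω => ((W ω, L ω), G ω)) η =
      (Measure.map (fun ω => (W ω, L ω)) η).prod (expMeasure 1) := by
    rw [← hmapG]
    exact (indepFun_iff_map_prod_eq_prod_map_map hWL.aemeasurable hG.aemeasurable).mp hindp
  have hψ : Measurable fun p : ℝ × ℝ => ω₀⁻¹ * x * p.1 * p.2 ^ (-α) :=
    (measurable_fst.const_mul _).mul (measurable_snd.pow_const _)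
  have hs : MeasurableSet {p : (ℝ × ℝ) × ℝ | ω₀⁻¹ * x * p.1.1 * p.1.2 ^ (-α) < p.2} :=
    measurableSet_lt (hψ.comp measurable_fst) measurable_snd
  have hBev : {ω | ω₀⁻¹ * x * W ω * L ω ^ (-α) < G ω} =
      (fun ω => ((W ω, L ω), G ω)) ⁻¹' {p : (ℝ × ℝ) × ℝ | ω₀⁻¹ * x * p.1.1 * p.1.2 ^ (-α) < p.2} :=
    rfl
  rw [hBev, ← Measure.map_apply (hWL.prodMk hG) hs, hmapP, Measure.prod_apply hs]
  have haeP : ∀ᵐ p ∂(Measure.map (fun ω => (W ω, L ω)) η), 0 < p.1 ∧ 0 ≤ p.2 := by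
    have hmset : MeasurableSet {p : ℝ × ℝ | 0 < p.1 ∧ 0 ≤ p.2} :=
      (measurableSet_lt measurable_const measurable_fst).inter
        (measurableSet_le measurable_const measurable_snd)
    rw [ae_map_iff hWL.aemeasurable hmset]
    filter_upwards [hWpos] with ω hWp
    exact ⟨hWp, hLnn ω⟩
  have hstep : (fun p : ℝ × ℝ =>
      expMeasure 1 (Prod.mk p ⁻¹' {q : (ℝ × ℝ) × ℝ | ω₀⁻¹ * x * q.1.1 * q.1.2 ^ (-α) < q.2}))
      =ᵐ[Measure.map (fun ω => (W ω, L ω)) η]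
      (fun p => ENNReal.ofReal (Real.exp (-(ω₀⁻¹ * x * p.1 * p.2 ^ (-α))))) := by
    filter_upwards [haeP] with p hp
    have hpre : Prod.mk p ⁻¹' {q : (ℝ × ℝ) × ℝ | ω₀⁻¹ * x * q.1.1 * q.1.2 ^ (-α) < q.2} =
        Ioi (ω₀⁻¹ * x * p.1 * p.2 ^ (-α)) := rfl
    rw [hpre, expMeasure_Ioi
      (mul_nonneg (mul_nonneg (mul_nonneg (inv_nonneg.mpr hω₀.le) hx.le) hp.1.le)
        (Real.rpow_nonneg hp.2 _))]
  rw [lintegral_congr_ae hstep, lintegral_map (f := fun p : ℝ × ℝ => ENNReal.ofReal (Real.exp (-(ω₀⁻¹ * x * p.1 * p.2 ^ (-α)))))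
    ((hψ.neg.exp).ennreal_ofReal) hWL]
  -- now integrate over W using independence of L and W
  have hindLW : IndepFun L W η := by
    have h := hind.indepFun (show (2 : Fin 3) ≠ 0 by decide)
    simpa using h
  have hmapLW : Measure.map (fun ω => (L ω, W ω)) η =
      (Measure.map L η).prod (gammaMeasure n 1) := by
    rw [← hmapW]
    exact (indepFun_iff_map_prod_eq_prod_map_map hL.aemeasurable hW.aemeasurable).mp hindLW
  have hFmeas : Measurable fun q : ℝ × ℝ =>
      ENNReal.ofReal (Real.exp (-(ω₀⁻¹ * x * q.2 * q.1 ^ (-α)))) :=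
    (((measurable_snd.const_mul _).mul (measurable_fst.pow_const _)).neg.exp).ennreal_ofReal
  have hrw : (fun ω => ENNReal.ofReal (Real.exp (-(ω₀⁻¹ * x * W ω * L ω ^ (-α))))) =
      fun ω => ENNReal.ofReal (Real.exp (-(ω₀⁻¹ * x * (L ω, W ω).2 * (L ω, W ω).1 ^ (-α)))) := rfl
  rw [hrw, ← lintegral_map hFmeas (hL.prodMk hW), hmapLW,
    lintegral_prod _ hFmeas.aemeasurable]
  have haeL : ∀ᵐ l ∂(Measure.map L η), 0 ≤ l := by
    rw [ae_map_iff hL.aemeasurable (show MeasurableSet {l : ℝ | 0 ≤ l} from measurableSet_Ici)]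
    exact ae_of_all _ hLnn
  have hinner : (fun l => ∫⁻ w, ENNReal.ofReal (Real.exp (-(ω₀⁻¹ * x * w * l ^ (-α))))
      ∂(gammaMeasure n 1)) =ᵐ[Measure.map L η]
      (fun l => ENNReal.ofReal ((1 + ω₀⁻¹ * x * l ^ (-α)) ^ (-(n : ℝ)))) := by
    filter_upwards [haeL] with l hl
    have hc : 0 ≤ ω₀⁻¹ * x * l ^ (-α) :=
      mul_nonneg (mul_nonneg (inv_nonneg.mpr hω₀.le) hx.le) (Real.rpow_nonneg hl _)
    rw [← gamma_laplace hn hc]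
    refine lintegral_congr fun w => ?_
    rw [show ω₀⁻¹ * x * w * l ^ (-α) = ω₀⁻¹ * x * l ^ (-α) * w by ring]
  rw [lintegral_congr_ae hinner,
    lintegral_map (f := fun l => ENNReal.ofReal ((1 + ω₀⁻¹ * x * l ^ (-α)) ^ (-(n : ℝ))))
      ((((measurable_id.pow_const _).const_mul _).const_add 1).pow_const _).ennreal_ofReal hL]

end Stmt9

namespace Stmt9

variable {Ω : Type*} [MeasurableSpace Ω]

lemma measure_eq_tsum_cond (μ : Measure Ω) [IsProbabilityMeasure μ] {N : Ω → ℕ}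
    (hN : Measurable N) {A : Set Ω} (hA : MeasurableSet A) :
    μ A = ∑' n : ℕ, μ {ω | N ω = n} * (μ[|{ω | N ω = n}]) A := by
  have hS : ∀ n : ℕ, MeasurableSet {ω | N ω = n} := fun n => hN (measurableSet_singleton n)
  have hcover : (⋃ n : ℕ, {ω | N ω = n} ∩ A) = A := by ext ω; simp
  have hdisj : Pairwise (Function.onFun Disjoint fun n : ℕ => {ω | N ω = n} ∩ A) := by
    intro m n hmn
    refine Set.disjoint_left.mpr ?_
    rintro ω ⟨h1, _⟩ ⟨h2, _⟩
    exact hmn (h1.symm.trans h2)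
  conv_lhs => rw [← hcover]
  rw [measure_iUnion hdisj (fun n => (hS n).inter hA)]
  congr 1; ext n
  rw [cond_apply (hS n)]
  rcases eq_or_ne (μ {ω | N ω = n}) 0 with h0 | h0
  · rw [h0, zero_mul]
    exact measure_mono_null inter_subset_left h0
  · rw [← mul_assoc, ENNReal.mul_inv_cancel h0 (measure_ne_top _ _), one_mul]

lemma lintegral_eq_tsum_cond (μ : Measure Ω) [IsProbabilityMeasure μ] {N : Ω → ℕ}
    (hN : Measurable N) (g : Ω → ℝ≥0∞) :
    ∫⁻ ω, g ω ∂μ = ∑' n : ℕ, μ {ω | N ω = n} * ∫⁻ ω, g ω ∂(μ[|{ω | N ω = n}]) := by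
  have hS : ∀ n : ℕ, MeasurableSet {ω | N ω = n} := fun n => hN (measurableSet_singleton n)
  have hcover : (⋃ n : ℕ, {ω | N ω = n}) = univ := by ext ω; simp
  have hdisj : Pairwise (Function.onFun Disjoint fun n : ℕ => {ω | N ω = n}) := by
    intro m n hmn
    refine Set.disjoint_left.mpr ?_
    rintro ω h1 h2
    exact hmn ((h1 : N ω = m).symm.trans h2)
  conv_lhs => rw [← setLIntegral_univ, ← hcover]
  rw [lintegral_iUnion hS hdisj]
  congr 1; ext n
  rcases eq_or_ne (μ {ω | N ω = n}) 0 with h0 | h0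
  · rw [h0, zero_mul, setLIntegral_measure_zero _ _ h0]
  · rw [ProbabilityTheory.cond, lintegral_smul_measure, smul_eq_mul, ← mul_assoc,
      ENNReal.mul_inv_cancel h0 (measure_ne_top _ _), one_mul]

lemma cond_ae_eq (μ : Measure Ω) [IsFiniteMeasure μ] {N : Ω → ℕ} (hN : Measurable N) (n : ℕ) :
    ∀ᵐ ω ∂(μ[|{ω | N ω = n}]), N ω = n := by
  rw [ae_iff]
  have hS : MeasurableSet {ω | N ω = n} := hN (measurableSet_singleton n)
  have h1 : {ω | ¬ N ω = n} = {ω | N ω = n}ᶜ := rfl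
  rw [h1, cond_apply hS, inter_compl_self, measure_empty, mul_zero]

lemma pow_identity {ω₀ α t : ℝ} (hω₀ : 0 < ω₀) (ht : 0 < t) (n : ℕ) :
    (ω₀⁻¹ * t ^ (-α)) ^ (-(n : ℝ)) = ω₀ ^ (n : ℝ) * t ^ (α * n) := by
  rw [Real.mul_rpow (inv_nonneg.mpr hω₀.le) (Real.rpow_nonneg ht.le _),
    Real.inv_rpow hω₀.le, Real.rpow_neg hω₀.le, inv_inv, ← Real.rpow_mul ht.le, neg_mul_neg]

lemma key_limit {lam ω₀ α : ℝ} (hlam : 0 < lam) (hω₀ : 0 < ω₀) (hα : 0 < α)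
    (n : ℕ) (hn : 0 < n) :
    Tendsto (fun x : ℝ => x ^ (n : ℝ) *
      (∫⁻ t, ENNReal.ofReal ((1 + ω₀⁻¹ * x * t ^ (-α)) ^ (-(n : ℝ))) ∂(rho lam)).toReal)
      atTop (𝓝 (ω₀ ^ (n : ℝ) * ((π * lam) ^ (-(α * n / 2)) * Real.Gamma (α * n / 2 + 1)))) := by
  have hπ : (0:ℝ) < π * lam := by positivity
  have hαn : (0:ℝ) < α * n := by
    have : (1:ℝ) ≤ (n:ℝ) := by exact_mod_cast hn
    nlinarith
  set b : ℝ → ℝ := fun t => ω₀ ^ (n : ℝ) * t ^ (α * n) with hbdef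
  have hbmeas : Measurable b := (measurable_id.pow_const _).const_mul _
  have hb0 : 0 ≤ᵐ[rho lam] b := by
    filter_upwards [rho_pos hlam] with t ht
    exact mul_nonneg (Real.rpow_nonneg hω₀.le _) (Real.rpow_nonneg ht.le _)
  have hblint : ∫⁻ t, ENNReal.ofReal (b t) ∂(rho lam) =
      ENNReal.ofReal (ω₀ ^ (n:ℝ)) *
        ENNReal.ofReal ((π*lam) ^ (-(α * n / 2)) * Real.Gamma (α * n / 2 + 1)) := by
    have h1 : ∀ t : ℝ, ENNReal.ofReal (b t) =
        ENNReal.ofReal (ω₀ ^ (n:ℝ)) * ENNReal.ofReal (t ^ (α * n)) :=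
      fun t => ENNReal.ofReal_mul (Real.rpow_nonneg hω₀.le _)
    simp_rw [h1]
    rw [lintegral_const_mul' _ _ ENNReal.ofReal_ne_top, rho_moment hlam hαn]
  have hbint : Integrable b (rho lam) := by
    refine ⟨hbmeas.aestronglyMeasurable, ?_⟩
    rw [hasFiniteIntegral_iff_ofReal hb0, hblint]
    exact ENNReal.mul_lt_top ENNReal.ofReal_lt_top ENNReal.ofReal_lt_top
  have hbval : ∫ t, b t ∂(rho lam) =
      ω₀ ^ (n:ℝ) * ((π*lam) ^ (-(α * n / 2)) * Real.Gamma (α * n / 2 + 1)) := by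
    have hΓ : 0 < Real.Gamma (α * n / 2 + 1) := Real.Gamma_pos_of_pos (by linarith)
    rw [integral_eq_lintegral_of_nonneg_ae hb0 hbmeas.aestronglyMeasurable, hblint,
      ← ENNReal.ofReal_mul (Real.rpow_nonneg hω₀.le _), ENNReal.toReal_ofReal
      (mul_nonneg (Real.rpow_nonneg hω₀.le _)
        (mul_nonneg (Real.rpow_nonneg hπ.le _) hΓ.le))]
  have hdct : Tendsto (fun x : ℝ => ∫ t, (x⁻¹ + ω₀⁻¹ * t ^ (-α)) ^ (-(n:ℝ)) ∂(rho lam)) atTop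
      (𝓝 (∫ t, b t ∂(rho lam))) := by
    refine tendsto_integral_filter_of_dominated_convergence b ?_ ?_ hbint ?_
    · filter_upwards [eventually_gt_atTop (0:ℝ)] with x hx
      exact ((((measurable_id.pow_const _).const_mul _).const_add x⁻¹).pow_const _).aestronglyMeasurable
    · filter_upwards [eventually_gt_atTop (0:ℝ)] with x hx
      filter_upwards [rho_pos hlam] with t ht
      have hd : 0 < ω₀⁻¹ * t ^ (-α) :=
        mul_pos (inv_pos.mpr hω₀) (Real.rpow_pos_of_pos ht _)
      have h1 : 0 < x⁻¹ + ω₀⁻¹ * t ^ (-α) := by positivity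
      rw [Real.norm_eq_abs, abs_of_nonneg (Real.rpow_nonneg h1.le _)]
      have hle : (x⁻¹ + ω₀⁻¹ * t ^ (-α)) ^ (-(n:ℝ)) ≤ (ω₀⁻¹ * t ^ (-α)) ^ (-(n:ℝ)) := by
        rw [Real.rpow_neg h1.le, Real.rpow_neg hd.le, Real.rpow_natCast, Real.rpow_natCast]
        exact inv_anti₀ (pow_pos hd n)
          (pow_le_pow_left₀ hd.le (le_add_of_nonneg_left (inv_nonneg.mpr hx.le)) n)
      exact hle.trans (le_of_eq (pow_identity hω₀ ht n))
    · filter_upwards [rho_pos hlam] with t ht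
      have hd : 0 < ω₀⁻¹ * t ^ (-α) :=
        mul_pos (inv_pos.mpr hω₀) (Real.rpow_pos_of_pos ht _)
      have hcont : ContinuousAt (fun y : ℝ => y ^ (-(n:ℝ))) (ω₀⁻¹ * t ^ (-α)) :=
        Real.continuousAt_rpow_const _ _ (Or.inl hd.ne')
      have h0 : Tendsto (fun x : ℝ => x⁻¹ + ω₀⁻¹ * t ^ (-α)) atTop
          (𝓝 (0 + ω₀⁻¹ * t ^ (-α))) := tendsto_inv_atTop_zero.add tendsto_const_nhds
      rw [zero_add] at h0
      have h2 := hcont.tendsto.comp h0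
      rw [pow_identity hω₀ ht n] at h2
      exact h2
  rw [hbval] at hdct
  refine hdct.congr' ?_
  filter_upwards [eventually_gt_atTop (0:ℝ)] with x hx
  have hmeas2 : Measurable fun t : ℝ => (1 + ω₀⁻¹ * x * t ^ (-α)) ^ (-(n:ℝ)) :=
    (((measurable_id.pow_const _).const_mul _).const_add 1).pow_const _
  have hnn : 0 ≤ᵐ[rho lam] fun t : ℝ => (1 + ω₀⁻¹ * x * t ^ (-α)) ^ (-(n:ℝ)) := by
    filter_upwards [rho_pos hlam] with t ht
    have hb2 : 0 < 1 + ω₀⁻¹ * x * t ^ (-α) := by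
      have : 0 ≤ ω₀⁻¹ * x * t ^ (-α) :=
        mul_nonneg (mul_nonneg (inv_nonneg.mpr hω₀.le) hx.le) (Real.rpow_nonneg ht.le _)
      linarith
    exact (Real.rpow_pos_of_pos hb2 _).le
  rw [← integral_eq_lintegral_of_nonneg_ae hnn hmeas2.aestronglyMeasurable, ← integral_const_mul]
  refine integral_congr_ae ?_
  filter_upwards [rho_pos hlam] with t ht
  have hb2 : 0 < 1 + ω₀⁻¹ * x * t ^ (-α) := by
    have : 0 ≤ ω₀⁻¹ * x * t ^ (-α) :=
      mul_nonneg (mul_nonneg (inv_nonneg.mpr hω₀.le) hx.le) (Real.rpow_nonneg ht.le _)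
    linarith
  have e1 : x⁻¹ + ω₀⁻¹ * t ^ (-α) = x⁻¹ * (1 + ω₀⁻¹ * x * t ^ (-α)) := by
    field_simp
  rw [e1, Real.mul_rpow (inv_nonneg.mpr hx.le) hb2.le, Real.inv_rpow hx.le,
    Real.rpow_neg hx.le, inv_inv]

end Stmt9

open Stmt9

/-- Rich-scattering tail lemma: with diversity order `N ≥ ν` (`ν ≥ 2`, `Pr(N = ν) > 0`),
and conditionally on `N = n`: `W ~ Gamma(n,1)`, `G ~ Exp(1)`, `L` Rayleigh-type,
mutually independent, the power–gain product `P G` with `P = ω₀ L^α / W` satisfies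
`Pr(PG > x) = E[(1 + ω₀⁻¹ x L^{-α})^{-N}]` and
`Pr(PG > x) ∼ ω₀^ν Γ(αν/2 + 1) Pr(N = ν) (π λ)^{-αν/2} x^{-ν}` as `x → ∞`. -/
theorem stmt_9
    {Ω : Type*} [MeasurableSpace Ω] (μ : Measure Ω) [IsProbabilityMeasure μ]
    (N : Ω → ℕ) (hN : Measurable N) (ν : ℕ) (hν : 2 ≤ ν) (hNν : ∀ ω, ν ≤ N ω)
    (hNmass : 0 < (μ {ω | N ω = ν}).toReal)
    (W G L : Ω → ℝ) (hW : Measurable W) (hG : Measurable G) (hL : Measurable L)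
    (lam ω₀ α : ℝ) (hlam : 0 < lam) (hω₀ : 0 < ω₀) (hα : 2 < α)
    (hLnn : ∀ ω, 0 ≤ L ω)
    (hcondW : ∀ n : ℕ, 0 < μ {ω | N ω = n} →
      Measure.map W (μ[|{ω | N ω = n}]) = gammaMeasure n 1)
    (hcondG : ∀ n : ℕ, 0 < μ {ω | N ω = n} →
      Measure.map G (μ[|{ω | N ω = n}]) = expMeasure 1)
    (hcondL : ∀ n : ℕ, 0 < μ {ω | N ω = n} → ∀ x : ℝ, 0 ≤ x →
      ((μ[|{ω | N ω = n}]) {ω | L ω > x}).toReal = Real.exp (-(π * lam * x ^ 2)))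
    (hcondInd : ∀ n : ℕ, 0 < μ {ω | N ω = n} →
      iIndepFun ![W, G, L] (μ[|{ω | N ω = n}])) :
    (∀ x : ℝ, 0 < x →
      (μ {ω | ω₀ * L ω ^ α * G ω / W ω > x}).toReal =
        ∫ ω, (1 + ω₀⁻¹ * x * L ω ^ (-α)) ^ (-(N ω : ℝ)) ∂μ) ∧
    Tendsto
      (fun x : ℝ =>
        (μ {ω | ω₀ * L ω ^ α * G ω / W ω > x}).toReal /
          (ω₀ ^ (ν : ℝ) * Real.Gamma (α * ν / 2 + 1) * (μ {ω | N ω = ν}).toReal *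
            (π * lam) ^ (-(α * ν / 2)) * x ^ (-(ν : ℝ))))
      atTop (nhds 1) := by
  have hαpos : (0:ℝ) < α := by linarith
  -- notation
  set S : ℕ → Set Ω := fun n => {ω | N ω = n} with hSdef
  have hSmeas : ∀ n, MeasurableSet (S n) := fun n => hN (measurableSet_singleton n)
  have hmassν : μ (S ν) ≠ 0 := by
    intro h; rw [hSdef] at h; simp only at h
    rw [show {ω | N ω = ν} = S ν from rfl, h] at hNmass; simp at hNmass
  -- K n x : the rho-integral
  set K : ℕ → ℝ → ℝ≥0∞ := fun n x =>
    ∫⁻ t, ENNReal.ofReal ((1 + ω₀⁻¹ * x * t ^ (-α)) ^ (-(n : ℝ))) ∂(rho lam) with hKdef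
  have hAmeas : ∀ x : ℝ, MeasurableSet {ω | ω₀ * L ω ^ α * G ω / W ω > x} := fun x =>
    measurableSet_lt measurable_const ((((hL.pow_const α).const_mul ω₀).mul hG).div hW)
  -- facts per n with positive mass
  have hnpos : ∀ n : ℕ, μ (S n) ≠ 0 → 0 < n := by
    intro n h0
    obtain ⟨ω, hω⟩ := nonempty_of_measure_ne_zero h0
    have := hNν ω
    have hn : N ω = n := hω
    omega
  have hcondL' : ∀ n : ℕ, μ (S n) ≠ 0 → ∀ᵐ ω ∂(μ[|S n]), 0 < L ω := by
    intro n h0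
    haveI := cond_isProbabilityMeasure (μ := μ) (s := S n) h0
    have h1 : ((μ[|S n]) {ω | L ω > 0}).toReal = 1 := by
      have := hcondL n (pos_iff_ne_zero.mpr h0) 0 le_rfl
      simpa using this
    have h2 : (μ[|S n]) {ω | L ω > 0} = 1 := (ENNReal.toReal_eq_one_iff _).mp h1
    rw [ae_iff]
    have h3 : {ω | ¬ 0 < L ω} = {ω | L ω > 0}ᶜ := by ext ω; simp [not_lt]
    rw [h3, measure_compl (measurableSet_lt measurable_const hL) (measure_ne_top _ _), h2,
      measure_univ, tsub_self]
  have hmapL : ∀ n : ℕ, μ (S n) ≠ 0 → Measure.map L (μ[|S n]) = rho lam := by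
    intro n h0
    haveI := cond_isProbabilityMeasure (μ := μ) (s := S n) h0
    exact map_L_eq _ hL hlam hLnn (hcondL n (pos_iff_ne_zero.mpr h0))
  have hphimeas : ∀ n : ℕ, ∀ x : ℝ, Measurable fun t : ℝ =>
      ENNReal.ofReal ((1 + ω₀⁻¹ * x * t ^ (-α)) ^ (-(n : ℝ))) := fun n x =>
    ((((measurable_id.pow_const _).const_mul _).const_add 1).pow_const _).ennreal_ofReal
  have hJ : ∀ n : ℕ, μ (S n) ≠ 0 → ∀ x : ℝ, 0 < x →
      (μ[|S n]) {ω | ω₀ * L ω ^ α * G ω / W ω > x} = K n x := by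
    intro n h0 x hx
    haveI := cond_isProbabilityMeasure (μ := μ) (s := S n) h0
    rw [cond_event_eq _ hW hG hL hω₀ hαpos hLnn (hcondL' n h0) (hnpos n h0)
      (hcondW n (pos_iff_ne_zero.mpr h0)) (hcondG n (pos_iff_ne_zero.mpr h0))
      (hcondInd n (pos_iff_ne_zero.mpr h0)) hx, hKdef,
      ← lintegral_map (hphimeas n x) hL, hmapL n h0]
  -- tsum representation
  have hsum : ∀ x : ℝ, 0 < x → μ {ω | ω₀ * L ω ^ α * G ω / W ω > x} =
      ∑' n : ℕ, μ (S n) * K n x := by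
    intro x hx
    rw [measure_eq_tsum_cond μ hN (hAmeas x)]
    refine tsum_congr fun n => ?_
    rcases eq_or_ne (μ (S n)) 0 with h0 | h0
    · rw [show ({ω | N ω = n} : Set Ω) = S n from rfl, h0, zero_mul, zero_mul]
    · rw [show ({ω | N ω = n} : Set Ω) = S n from rfl, hJ n h0 x hx]
  constructor
  · -- Part 1
    intro x hx
    have hΦnn : ∀ ω, 0 ≤ (1 + ω₀⁻¹ * x * L ω ^ (-α)) ^ (-(N ω : ℝ)) := by
      intro ω
      have h1 : 0 < 1 + ω₀⁻¹ * x * L ω ^ (-α) := by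
        have h2 : 0 ≤ ω₀⁻¹ * x * L ω ^ (-α) :=
          mul_nonneg (mul_nonneg (inv_nonneg.mpr hω₀.le) hx.le) (Real.rpow_nonneg (hLnn ω) _)
        linarith
      exact (Real.rpow_pos_of_pos h1 _).le
    have hΦmeas : Measurable fun ω => (1 + ω₀⁻¹ * x * L ω ^ (-α)) ^ (-(N ω : ℝ)) := by
      refine Measurable.pow (((hL.pow_const _).const_mul _).const_add 1) ?_
      exact (measurable_from_top (f := fun k : ℕ => -(k : ℝ))).comp hN
    rw [integral_eq_lintegral_of_nonneg_ae (ae_of_all _ hΦnn) hΦmeas.aestronglyMeasurable]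
    congr 1
    rw [hsum x hx, lintegral_eq_tsum_cond μ hN]
    refine tsum_congr fun n => ?_
    rcases eq_or_ne (μ (S n)) 0 with h0 | h0
    · rw [show ({ω | N ω = n} : Set Ω) = S n from rfl, h0, zero_mul, zero_mul]
    · rw [show ({ω | N ω = n} : Set Ω) = S n from rfl]
      congr 1
      haveI := cond_isProbabilityMeasure (μ := μ) (s := S n) h0
      have hae : ∀ᵐ ω ∂(μ[|S n]), N ω = n := cond_ae_eq μ hN n
      have hcongr : ∫⁻ ω, ENNReal.ofReal ((1 + ω₀⁻¹ * x * L ω ^ (-α)) ^ (-(N ω : ℝ))) ∂(μ[|S n])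
          = ∫⁻ ω, ENNReal.ofReal ((1 + ω₀⁻¹ * x * L ω ^ (-α)) ^ (-(n : ℝ))) ∂(μ[|S n]) := by
        refine lintegral_congr_ae ?_
        filter_upwards [hae] with ω hω
        rw [hω]
      rw [hKdef, hcongr, ← lintegral_map (hphimeas n x) hL, hmapL n h0]
  · -- Part 2
    set T : ℝ → ℝ := fun x => (μ {ω | ω₀ * L ω ^ α * G ω / W ω > x}).toReal with hTdef
    have hνpos : 0 < ν := by omega
    have hν1pos : 0 < ν + 1 := by omega
    have hπ : (0:ℝ) < π * lam := by positivity
    have hKle1 : ∀ n : ℕ, ∀ x : ℝ, 0 < x → K n x ≤ 1 := by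
      intro n x hx
      rw [hKdef]
      calc ∫⁻ t, ENNReal.ofReal ((1 + ω₀⁻¹ * x * t ^ (-α)) ^ (-(n:ℝ))) ∂(rho lam)
          ≤ ∫⁻ _t, 1 ∂(rho lam) := by
            refine lintegral_mono_ae ?_
            filter_upwards [rho_pos hlam] with t ht
            rw [← ENNReal.ofReal_one]
            refine ENNReal.ofReal_le_ofReal ?_
            refine Real.rpow_le_one_of_one_le_of_nonpos ?_ (by simp)
            have h2 : 0 ≤ ω₀⁻¹ * x * t ^ (-α) :=
              mul_nonneg (mul_nonneg (inv_nonneg.mpr hω₀.le) hx.le) (Real.rpow_nonneg ht.le _)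
            linarith
        _ = 1 := by rw [lintegral_one, measure_univ]
    have hKne : ∀ n : ℕ, ∀ x : ℝ, 0 < x → K n x ≠ ⊤ :=
      fun n x hx => (lt_of_le_of_lt (hKle1 n x hx) ENNReal.one_lt_top).ne
    have hKmono : ∀ n : ℕ, ν + 1 ≤ n → ∀ x : ℝ, 0 < x → K n x ≤ K (ν+1) x := by
      intro n hn x hx
      rw [hKdef]
      refine lintegral_mono_ae ?_
      filter_upwards [rho_pos hlam] with t ht
      refine ENNReal.ofReal_le_ofReal (Real.rpow_le_rpow_of_exponent_le ?_ ?_)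
      · have h2 : 0 ≤ ω₀⁻¹ * x * t ^ (-α) :=
          mul_nonneg (mul_nonneg (inv_nonneg.mpr hω₀.le) hx.le) (Real.rpow_nonneg ht.le _)
        linarith
      · exact neg_le_neg (by exact_mod_cast hn)
    -- partition sums to 1
    have hdisj : Pairwise (Function.onFun Disjoint fun n : ℕ => S n) := by
      intro m n hmn
      refine Set.disjoint_left.mpr ?_
      rintro ω h1 h2
      exact hmn ((h1 : N ω = m).symm.trans h2)
    have hsum1 : ∑' n : ℕ, μ (S n) = 1 := by
      rw [← measure_iUnion hdisj hSmeas]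
      have hcover : (⋃ n : ℕ, S n) = univ := by ext ω; simp [hSdef]
      rw [hcover, measure_univ]
    -- upper and lower bounds
    have hlow : ∀ x : ℝ, 0 < x →
        μ (S ν) * K ν x ≤ μ {ω | ω₀ * L ω ^ α * G ω / W ω > x} := by
      intro x hx
      rw [hsum x hx]
      exact ENNReal.le_tsum ν
    have hup : ∀ x : ℝ, 0 < x → μ {ω | ω₀ * L ω ^ α * G ω / W ω > x} ≤
        μ (S ν) * K ν x + K (ν+1) x := by
      intro x hx
      rw [hsum x hx, ENNReal.tsum_eq_add_tsum_ite ν]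
      refine add_le_add le_rfl ?_
      refine le_trans (ENNReal.tsum_le_tsum
        (g := fun n : ℕ => μ (S n) * K (ν+1) x) fun n => ?_) ?_
      · by_cases h : n = ν
        · simp [h]
        · rcases eq_or_ne (μ (S n)) 0 with h0 | h0
          · simp [h, h0]
          · rw [if_neg h]
            have hn1 : ν + 1 ≤ n := by
              obtain ⟨ω, hω⟩ := nonempty_of_measure_ne_zero h0
              have h3 := hNν ω
              have h4 : N ω = n := hω
              omega
            exact mul_le_mul_right (hKmono n hn1 x hx) _
      · rw [ENNReal.tsum_mul_right, hsum1, one_mul]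
    -- real versions
    have hlowR : ∀ x : ℝ, 0 < x →
        (μ (S ν)).toReal * (K ν x).toReal ≤ T x := by
      intro x hx
      rw [← ENNReal.toReal_mul]
      exact ENNReal.toReal_mono (measure_ne_top μ _) (hlow x hx)
    have hupR : ∀ x : ℝ, 0 < x →
        T x ≤ (μ (S ν)).toReal * (K ν x).toReal + (K (ν+1) x).toReal := by
      intro x hx
      have h1 : μ (S ν) * K ν x ≠ ⊤ :=
        ENNReal.mul_ne_top (measure_ne_top _ _) (hKne ν x hx)
      have h2 : μ (S ν) * K ν x + K (ν+1) x ≠ ⊤ :=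
        ENNReal.add_ne_top.mpr ⟨h1, hKne (ν+1) x hx⟩
      have h3 := ENNReal.toReal_mono h2 (hup x hx)
      rwa [ENNReal.toReal_add h1 (hKne (ν+1) x hx), ENNReal.toReal_mul] at h3
    -- limits
    have hMν := key_limit hlam hω₀ hαpos ν hνpos
    have hMν1 := key_limit hlam hω₀ hαpos (ν+1) hν1pos
    have hzero : Tendsto (fun x : ℝ => x⁻¹ * (x ^ ((ν+1 : ℕ) : ℝ) *
        (K (ν+1) x).toReal)) atTop (𝓝 0) := by
      have := tendsto_inv_atTop_zero.mul hMν1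
      rwa [zero_mul] at this
    have hlower : Tendsto (fun x : ℝ => (μ (S ν)).toReal * (x ^ (ν : ℝ) * (K ν x).toReal))
        atTop (𝓝 ((μ (S ν)).toReal *
          (ω₀ ^ (ν:ℝ) * ((π * lam) ^ (-(α * ν / 2)) * Real.Gamma (α * ν / 2 + 1))))) :=
      hMν.const_mul _
    have hupper : Tendsto (fun x : ℝ => (μ (S ν)).toReal * (x ^ (ν : ℝ) * (K ν x).toReal)
        + x⁻¹ * (x ^ ((ν+1 : ℕ) : ℝ) * (K (ν+1) x).toReal)) atTop
        (𝓝 ((μ (S ν)).toReal *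
          (ω₀ ^ (ν:ℝ) * ((π * lam) ^ (-(α * ν / 2)) * Real.Gamma (α * ν / 2 + 1))))) := by
      have := hlower.add hzero
      rwa [add_zero] at this
    have hmid : Tendsto (fun x : ℝ => x ^ (ν : ℝ) * T x) atTop
        (𝓝 ((μ (S ν)).toReal *
          (ω₀ ^ (ν:ℝ) * ((π * lam) ^ (-(α * ν / 2)) * Real.Gamma (α * ν / 2 + 1))))) := by
      refine tendsto_of_tendsto_of_tendsto_of_le_of_le' hlower hupper ?_ ?_
      · filter_upwards [eventually_gt_atTop (0:ℝ)] with x hx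
        have e1 : (μ (S ν)).toReal * (x ^ (ν : ℝ) * (K ν x).toReal)
            = x ^ (ν : ℝ) * ((μ (S ν)).toReal * (K ν x).toReal) := by ring
        rw [e1]
        exact mul_le_mul_of_nonneg_left (hlowR x hx) (Real.rpow_nonneg hx.le _)
      · filter_upwards [eventually_gt_atTop (0:ℝ)] with x hx
        have e2 : x⁻¹ * (x ^ ((ν+1 : ℕ) : ℝ) * (K (ν+1) x).toReal)
            = x ^ (ν : ℝ) * (K (ν+1) x).toReal := by
          have hx1 : x ^ ((ν+1 : ℕ) : ℝ) = x ^ (ν : ℝ) * x := by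
            push_cast
            rw [Real.rpow_add_one hx.ne']
          rw [hx1, show x⁻¹ * (x ^ (ν:ℝ) * x * (K (ν+1) x).toReal)
            = (x⁻¹ * x) * (x ^ (ν:ℝ) * (K (ν+1) x).toReal) by ring,
            inv_mul_cancel₀ hx.ne', one_mul]
        rw [e2]
        have e3 : (μ (S ν)).toReal * (x ^ (ν:ℝ) * (K ν x).toReal)
            + x ^ (ν:ℝ) * (K (ν+1) x).toReal
            = x ^ (ν:ℝ) * ((μ (S ν)).toReal * (K ν x).toReal + (K (ν+1) x).toReal) := by ring
        rw [e3]
        exact mul_le_mul_of_nonneg_left (hupR x hx) (Real.rpow_nonneg hx.le _)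
    -- final
    have hΓpos : 0 < Real.Gamma (α * ν / 2 + 1) := by
      refine Real.Gamma_pos_of_pos ?_
      have h5 : (0:ℝ) ≤ α * ν := mul_nonneg hαpos.le (Nat.cast_nonneg ν)
      linarith
    set Cst : ℝ := ω₀ ^ (ν : ℝ) * Real.Gamma (α * ν / 2 + 1) * (μ {ω | N ω = ν}).toReal *
      (π * lam) ^ (-(α * ν / 2)) with hCdef
    have hCpos : 0 < Cst := by
      rw [hCdef]
      have h6 : (0:ℝ) < (π * lam) ^ (-(α * ν / 2)) := Real.rpow_pos_of_pos hπ _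
      have h7 : (0:ℝ) < ω₀ ^ (ν : ℝ) := Real.rpow_pos_of_pos hω₀ _
      positivity
    have hceq : (μ (S ν)).toReal *
        (ω₀ ^ (ν:ℝ) * ((π * lam) ^ (-(α * ν / 2)) * Real.Gamma (α * ν / 2 + 1))) = Cst := by
      rw [hCdef, show ({ω | N ω = ν} : Set Ω) = S ν from rfl]
      ring
    rw [hceq] at hmid
    have hfinal := hmid.div_const Cst
    rw [div_self hCpos.ne'] at hfinal
    refine hfinal.congr' ?_
    filter_upwards [eventually_gt_atTop (0:ℝ)] with x hx
    have hxν : (0:ℝ) < x ^ (ν : ℝ) := Real.rpow_pos_of_pos hx _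
    rw [Real.rpow_neg hx.le]
    field_simp
    ring
end

section
/- Let V be a nonnegative random variable with Pr(V > x) = E[e^{-πλ(βx/ω)^{2/α}}] where β is a random variable supported in [δ/γ, δ'/g₀] ⊂ (0, ∞) for constants 0 < δ ≤ δ' and γ > 0 (with g₀ > 0). If ε > 0 and Pr(β < (1+ε)δ/γ) > 0, then limsup_{x→∞} [-log Pr(V > x)] / [πλ(δ x/(γω))^{2/α}] ≤ (1+ε)^{2/α}. -/
open MeasureTheory Real Filter

/-- Lower-tail-bound half of the sparse-scattering power–gain lemma: if
`Pr(V > x) = E[exp (-π λ (β x / ω₀)^{2/α})]` with `β` supported in `[δ/γ, δ'/g₀]` and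
`Pr(β < (1+ε)δ/γ) > 0`, then
`limsup_{x→∞} (-log Pr(V > x)) / (π λ (δ x/(γ ω₀))^{2/α}) ≤ (1+ε)^{2/α}`. -/
theorem stmt_18
    {Ω : Type*} [MeasurableSpace Ω] (μ : Measure Ω) [IsProbabilityMeasure μ]
    (V β : Ω → ℝ) (hV : Measurable V) (hβ : Measurable β)
    (lam δ δ' γ g₀ ω₀ α ε : ℝ)
    (hlam : 0 < lam) (hδ : 0 < δ) (hδδ' : δ ≤ δ') (hγ : 0 < γ) (hg₀ : 0 < g₀)
    (hω₀ : 0 < ω₀) (hα : 2 < α) (hε : 0 < ε)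
    (hβsupp : ∀ ω, β ω ∈ Set.Icc (δ / γ) (δ' / g₀))
    (hVtail : ∀ x : ℝ, 0 < x →
      (μ {ω | V ω > x}).toReal =
        ∫ ω, Real.exp (-(π * lam * (β ω * x / ω₀) ^ (2 / α))) ∂μ)
    (hβmass : 0 < (μ {ω | β ω < (1 + ε) * (δ / γ)}).toReal) :
    Filter.limsup
      (fun x : ℝ =>
        (-Real.log ((μ {ω | V ω > x}).toReal)) /
          (π * lam * (δ * x / (γ * ω₀)) ^ (2 / α)))
      atTop ≤ (1 + ε) ^ (2 / α) := by
  have hπ : (0:ℝ) < π := Real.pi_pos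
  have h2α : (0:ℝ) < 2 / α := by positivity
  set L : ℝ := (1 + ε) ^ (2 / α) with hL
  set b : ℝ := (1 + ε) * (δ / γ) with hb
  set A : Set Ω := {ω | β ω < b} with hAdef
  have hA : MeasurableSet A := measurableSet_lt hβ measurable_const
  set p : ℝ := (μ A).toReal with hp
  have hp0 : 0 < p := hβmass
  set D : ℝ → ℝ := fun x => π * lam * (δ * x / (γ * ω₀)) ^ (2 / α) with hD
  -- eventual bound
  have hev : ∀ᶠ x in atTop,
      (-Real.log ((μ {ω | V ω > x}).toReal)) / D x ≤ (-Real.log p) / D x + L := by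
    filter_upwards [eventually_gt_atTop (0:ℝ)] with x hx
    have hbase : 0 < δ * x / (γ * ω₀) := by positivity
    have hDpos : 0 < D x := by
      have := Real.rpow_pos_of_pos hbase (2 / α)
      simp only [hD]; positivity
    set E : ℝ := Real.exp (-(L * D x)) with hE
    have hEpos : 0 < E := Real.exp_pos _
    set g : Ω → ℝ := fun ω => Real.exp (-(π * lam * (β ω * x / ω₀) ^ (2 / α))) with hg
    have hgmeas : Measurable g := by
      apply (Real.measurable_exp.comp _)
      exact ((((Real.continuous_rpow_const h2α.le).measurable.comp
        ((hβ.mul_const x).div_const ω₀)).const_mul (π * lam)).neg)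
    have hgle1 : ∀ ω, g ω ≤ 1 := by
      intro ω
      have hβpos : 0 < β ω := lt_of_lt_of_le (by positivity) (hβsupp ω).1
      have : 0 ≤ (β ω * x / ω₀) ^ (2 / α) :=
        Real.rpow_nonneg (by positivity) _
      calc g ω ≤ Real.exp 0 := Real.exp_le_exp.mpr (by nlinarith [mul_nonneg (mul_nonneg hπ.le hlam.le) this])
        _ = 1 := Real.exp_zero
    have hgint : Integrable g μ := by
      refine (integrable_const (1:ℝ)).mono' hgmeas.aestronglyMeasurable ?_
      filter_upwards with ω
      rw [Real.norm_eq_abs, abs_of_pos (Real.exp_pos _)]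
      exact hgle1 ω
    -- on A, E ≤ g ω
    have hEg : ∀ ω ∈ A, E ≤ g ω := by
      intro ω hω
      have hβpos : 0 < β ω := lt_of_lt_of_le (by positivity) (hβsupp ω).1
      have h1 : β ω * x / ω₀ ≤ b * x / ω₀ := by
        have : β ω ≤ b := le_of_lt hω
        have hx0 : 0 ≤ x := hx.le
        gcongr
      have h2 : (β ω * x / ω₀) ^ (2 / α) ≤ (b * x / ω₀) ^ (2 / α) :=
        Real.rpow_le_rpow (by positivity) h1 h2α.le
      have hbx : b * x / ω₀ = (1 + ε) * (δ * x / (γ * ω₀)) := by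
        rw [hb]; field_simp
      have h3 : (b * x / ω₀) ^ (2 / α) = L * (δ * x / (γ * ω₀)) ^ (2 / α) := by
        rw [hbx, Real.mul_rpow (by positivity) hbase.le]
      have h4 : π * lam * (β ω * x / ω₀) ^ (2 / α) ≤ L * D x := by
        calc π * lam * (β ω * x / ω₀) ^ (2 / α)
            ≤ π * lam * (b * x / ω₀) ^ (2 / α) := by gcongr
          _ = L * D x := by rw [h3, hD]; ring
      exact Real.exp_le_exp.mpr (by linarith)
    -- integral lower bound
    have hintA : p * E ≤ ∫ ω, g ω ∂μ := by
      have h1 : ∫ ω in A, E ∂μ = p * E := by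
        rw [setIntegral_const, smul_eq_mul]; rfl
      have h2 : ∫ ω in A, E ∂μ ≤ ∫ ω in A, g ω ∂μ :=
        setIntegral_mono_on (integrableOn_const (measure_ne_top μ A))
          hgint.integrableOn hA hEg
      have h3 : ∫ ω in A, g ω ∂μ ≤ ∫ ω, g ω ∂μ :=
        setIntegral_le_integral hgint (Filter.Eventually.of_forall fun ω => (Real.exp_pos _).le)
      linarith
    have hPr : p * E ≤ (μ {ω | V ω > x}).toReal := by
      rw [hVtail x hx]; exact hintA
    have hlog : Real.log (p * E) ≤ Real.log ((μ {ω | V ω > x}).toReal) :=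
      Real.log_le_log (by positivity) hPr
    have hlogpe : Real.log (p * E) = Real.log p - L * D x := by
      rw [Real.log_mul hp0.ne' hEpos.ne', hE, Real.log_exp]; ring
    have hkey : -Real.log ((μ {ω | V ω > x}).toReal) ≤ -Real.log p + L * D x := by
      rw [hlogpe] at hlog; linarith
    calc (-Real.log ((μ {ω | V ω > x}).toReal)) / D x
        ≤ (-Real.log p + L * D x) / D x := by gcongr
      _ = (-Real.log p) / D x + L := by field_simp
  -- D tends to infinity
  have hDtend : Tendsto D atTop atTop := by
    have h1 : Tendsto (fun x : ℝ => δ * x / (γ * ω₀)) atTop atTop := by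
      apply Tendsto.atTop_div_const (by positivity)
      exact (tendsto_id.const_mul_atTop hδ)
    have h2 : Tendsto (fun x : ℝ => (δ * x / (γ * ω₀)) ^ (2 / α)) atTop atTop :=
      (tendsto_rpow_atTop h2α).comp h1
    exact h2.const_mul_atTop (by positivity)
  have htendg : Tendsto (fun x => (-Real.log p) / D x + L) atTop (nhds L) := by
    have h0 : Tendsto (fun x => (-Real.log p) / D x) atTop (nhds 0) :=
      Tendsto.div_atTop tendsto_const_nhds hDtend
    simpa using h0.add tendsto_const_nhds
  -- limsup comparison
  have hcobdd : IsCoboundedUnder (· ≤ ·)  atTop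
      (fun x : ℝ => (-Real.log ((μ {ω | V ω > x}).toReal)) / D x) := by
    apply isCoboundedUnder_le_of_eventually_le atTop (x := (0:ℝ))
    filter_upwards [eventually_gt_atTop (0:ℝ)] with x hx
    have hbase : 0 < δ * x / (γ * ω₀) := by positivity
    have hDpos : 0 < D x := by
      have := Real.rpow_pos_of_pos hbase (2 / α)
      simp only [hD]; positivity
    have hPle1 : (μ {ω | V ω > x}).toReal ≤ 1 := by
      have h := prob_le_one (μ := μ) (s := {ω | V ω > x})
      simpa using ENNReal.toReal_mono (by simp) h
    have : Real.log ((μ {ω | V ω > x}).toReal) ≤ 0 :=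
      Real.log_nonpos ENNReal.toReal_nonneg hPle1
    exact div_nonneg (by linarith) hDpos.le
  have hbdd : IsBoundedUnder (· ≤ ·) atTop (fun x => (-Real.log p) / D x + L) :=
    htendg.isBoundedUnder_le
  refine le_trans (Filter.limsup_le_limsup hev hcobdd hbdd) (le_of_eq htendg.limsup_eq)
end
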